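/- arXiv:1807.00512 — 5 statements merged into one kernel-verified Lean document; each statement's English description precedes it below -/
import Mathlib

section
/- If A is an n×n real matrix with A_{i,i} = 0 for all i, the identity being an optimal permutation is equivalent to the condition that every cycle in the weighted digraph of A has nonpositive weight. -/
open Finset

private lemma id_optimal_aux_fwd {n : ℕ} (A : Matrix (Fin n) (Fin n) ℝ) (hdiag : ∀ i, A i i = 0)
    (hopt : ∀ π : Equiv.Perm (Fin n), ∑ i, A i (π i) ≤ 0)
    (m : ℕ) (f : Fin (m + 1) → Fin n) (hf : Function.Injective f) :
    ∑ k : Fin (m + 1), A (f k) (f (k + 1)) ≤ 0 := by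
  set l : List (Fin n) := List.ofFn f with hl
  have hnd : l.Nodup := List.nodup_ofFn.2 hf
  set π := l.formPerm with hπ
  have hlen : l.length = m + 1 := by simp [hl]
  have key : ∀ k : Fin (m + 1), π (f k) = f (k + 1) := by
    intro k
    have hk : (k : ℕ) < l.length := by rw [hlen]; exact k.isLt
    have h1 : l[(k : ℕ)] = f k := by
      simp only [hl]
      rw [List.getElem_ofFn]
    have h2 := List.formPerm_apply_getElem l hnd (k : ℕ) hk
    rw [h1] at h2
    rw [hπ, h2]
    have : ((k : ℕ) + 1) % l.length < l.length := Nat.mod_lt _ (by omega)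
    simp only [hl, List.getElem_ofFn]
    congr 1
    ext
    simp [hlen, Fin.add_def]
  have himg : Finset.image f Finset.univ = l.toFinset := by
    ext y
    simp only [Finset.mem_image, Finset.mem_univ, true_and, List.mem_toFinset, hl,
      List.mem_ofFn, Set.mem_range]
  calc ∑ k : Fin (m + 1), A (f k) (f (k + 1))
      = ∑ k : Fin (m + 1), A (f k) (π (f k)) := by
        refine Finset.sum_congr rfl fun k _ => by rw [key k]
    _ = ∑ i ∈ Finset.image f Finset.univ, A i (π i) := by
        rw [Finset.sum_image (fun a _ b _ h => hf h)]
    _ = ∑ i ∈ l.toFinset, A i (π i) := by rw [himg]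
    _ = ∑ i, A i (π i) := by
        refine Finset.sum_subset (Finset.subset_univ _) fun i _ hi => ?_
        have : π i = i := List.formPerm_apply_of_notMem (l := l) (x := i) (by simpa using hi)
        rw [this, hdiag]
    _ ≤ 0 := hopt π

open Equiv Equiv.Perm Finset

private lemma id_optimal_aux_bwd {n : ℕ} (A : Matrix (Fin n) (Fin n) ℝ) (hdiag : ∀ i, A i i = 0)
    (hcyc : ∀ (m : ℕ) (f : Fin (m + 1) → Fin n), Function.Injective f →
      ∑ k : Fin (m + 1), A (f k) (f (k + 1)) ≤ 0) :
    ∀ (N : ℕ) (π : Equiv.Perm (Fin n)), π.support.card ≤ N → ∑ i, A i (π i) ≤ 0 := by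
  intro N
  induction N with
  | zero =>
    intro π hπ
    have h1 : π = 1 := by
      rw [← Equiv.Perm.support_eq_empty_iff]
      exact Finset.card_eq_zero.1 (Nat.le_zero.1 hπ)
    subst h1
    simp only [Equiv.Perm.one_apply]
    simp [hdiag]
  | succ N ih =>
    intro π hπ
    by_cases h1 : π = 1
    · subst h1; simp only [Equiv.Perm.one_apply]; simp [hdiag]
    · obtain ⟨x, hx⟩ : ∃ x, π x ≠ x := by
        by_contra h
        push_neg at h
        exact h1 (Equiv.ext h)
      set c := π.cycleOf x with hc
      set σ := π * c⁻¹ with hσ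
      have hxmem : x ∈ c.support :=
        mem_support_cycleOf_iff.2 ⟨Equiv.Perm.SameCycle.refl _ _, mem_support.2 hx⟩
      -- σ behaviour
      have hcinv : ∀ i, i ∈ c.support → c⁻¹ i = π⁻¹ i := by
        intro i hi
        have hsc : π.SameCycle x i := (mem_support_cycleOf_iff.1 hi).1
        rw [hc, cycleOf_inv, cycleOf_apply, if_pos ((sameCycle_inv).2 hsc)]
      have hfix : ∀ i ∈ c.support, σ i = i := by
        intro i hi
        rw [hσ, Equiv.Perm.mul_apply, hcinv i hi, Equiv.Perm.coe_inv, Equiv.apply_symm_apply]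
      have hsame : ∀ i ∉ c.support, σ i = π i := by
        intro i hi
        have : c⁻¹ i = i := by
          rw [← Equiv.Perm.notMem_support, Equiv.Perm.support_inv]
          exact hi
        rw [hσ, Equiv.Perm.mul_apply, this]
      have hss : σ.support ⊂ π.support := by
        constructor
        · intro i hi
          rw [mem_support] at hi ⊢
          by_cases h : i ∈ c.support
          · exact absurd (hfix i h) hi
          · rw [hsame i h] at hi; exact hi
        · intro h
          have := h (mem_support.2 hx)
          rw [mem_support] at this
          exact this (hfix x hxmem)
      have hσcard : σ.support.card ≤ N := by
        have := Finset.card_lt_card hss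
        omega
      have hσsum : ∑ i, A i (σ i) ≤ 0 := ih σ hσcard
      -- split the sum
      have hsplit : ∑ i, A i (π i) = ∑ i, A i (σ i) + ∑ i ∈ c.support, A i (π i) := by
        have h2 : ∑ i, (A i (π i) - A i (σ i)) = ∑ i ∈ c.support, (A i (π i) - A i (σ i)) := by
          refine (Finset.sum_subset (Finset.subset_univ _) fun i _ hi => ?_).symm
          rw [hsame i hi, sub_self]
        have h3 : ∑ i ∈ c.support, (A i (π i) - A i (σ i)) = ∑ i ∈ c.support, A i (π i) := by
          refine Finset.sum_congr rfl fun i hi => ?_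
          rw [hfix i hi, hdiag, sub_zero]
        rw [Finset.sum_sub_distrib] at h2
        linarith [h2, h3]
      -- the cycle sum
      obtain ⟨m, hm⟩ : ∃ m, c.support.card = m + 1 := by
        have : 0 < c.support.card := Finset.card_pos.2 ⟨x, hxmem⟩
        exact ⟨c.support.card - 1, by omega⟩
      set f : Fin (m + 1) → Fin n := fun k => (π ^ (k : ℕ)) x with hf
      have hcx : c x ≠ x := by rw [hc, cycleOf_apply_self]; exact hx
      have hcic : c.IsCycle := isCycle_cycleOf π hx
      have horder : orderOf c = m + 1 := by rw [hcic.orderOf, ← hm]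
      have hmem : ∀ k : Fin (m + 1), f k ∈ c.support := by
        intro k
        refine mem_support_cycleOf_iff.2 ⟨⟨(k : ℤ), ?_⟩, mem_support.2 hx⟩
        rw [zpow_natCast]
      have hfpow : ∀ a : ℕ, (π ^ a) x = (c ^ a) x := fun a =>
        (cycleOf_pow_apply_self π x a).symm
      have hinj : Function.Injective f := by
        have key : ∀ a b : Fin (m + 1), (a : ℕ) ≤ (b : ℕ) → f a = f b → a = b := by
          intro a b hab hfab
          have h4 : (c ^ (b : ℕ)) x = (c ^ (a : ℕ)) x := by
            rw [← hfpow, ← hfpow]; exact hfab.symm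
          have h5 : (c ^ ((b : ℕ) - (a : ℕ))) x = x := by
            have : (c ^ (a : ℕ)) ((c ^ ((b : ℕ) - (a : ℕ))) x) = (c ^ (a : ℕ)) x := by
              rw [← Equiv.Perm.mul_apply, ← pow_add]
              rw [Nat.add_sub_cancel' hab]
              exact h4
            exact (c ^ (a : ℕ)).injective this
          have h6 : c ^ ((b : ℕ) - (a : ℕ)) = 1 := (hcic.pow_eq_one_iff' hcx).2 h5
          have h7 : orderOf c ∣ (b : ℕ) - (a : ℕ) := orderOf_dvd_of_pow_eq_one h6
          rw [horder] at h7
          have hb := b.isLt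
          have ha := a.isLt
          have : (b : ℕ) - (a : ℕ) = 0 := by
            rcases Nat.eq_zero_of_dvd_of_lt h7 (by omega) with h
            · exact h
          exact Fin.ext (by omega)
        intro a b hfab
        rcases le_total (a : ℕ) (b : ℕ) with h | h
        · exact key a b h hfab
        · exact (key b a h hfab.symm).symm
      have himg : Finset.image f Finset.univ = c.support := by
        apply Finset.eq_of_subset_of_card_le
        · intro y hy
          obtain ⟨k, _, rfl⟩ := Finset.mem_image.1 hy
          exact hmem k
        · rw [Finset.card_image_of_injective _ hinj, hm, Finset.card_univ, Fintype.card_fin]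
      have hstep : ∀ k : Fin (m + 1), π (f k) = f (k + 1) := by
        intro k
        have h8 : ((k + 1 : Fin (m + 1)) : ℕ) = ((k : ℕ) + 1) % (m + 1) := by
          simp [Fin.add_def]
        have h9 : (π ^ (((k : ℕ) + 1) % (m + 1))) x = (π ^ ((k : ℕ) + 1)) x := by
          have h10 := pow_mod_card_support_cycleOf_self_apply π ((k : ℕ) + 1) x
          rwa [show (π.cycleOf x).support.card = m + 1 from hm] at h10
        rw [hf]
        simp only
        rw [h8, h9, pow_succ', Equiv.Perm.mul_apply]
      have hcycsum : ∑ i ∈ c.support, A i (π i) ≤ 0 := by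
        rw [← himg, Finset.sum_image (fun a _ b _ h => hinj h)]
        calc ∑ k : Fin (m + 1), A (f k) (π (f k))
            = ∑ k : Fin (m + 1), A (f k) (f (k + 1)) :=
              Finset.sum_congr rfl fun k _ => by rw [hstep k]
          _ ≤ 0 := hcyc m f hinj
      linarith [hsplit, hσsum, hcycsum]

/-- For a matrix with zero diagonal, the identity is an optimal permutation iff
every cycle in the weighted digraph of `A` has nonpositive weight. -/
theorem id_optimal_iff_cycles_nonpos {n : ℕ} (A : Matrix (Fin n) (Fin n) ℝ)
    (hdiag : ∀ i, A i i = 0) :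
    (∀ π : Equiv.Perm (Fin n), ∑ i, A i (π i) ≤ 0) ↔
    (∀ (m : ℕ) (f : Fin (m + 1) → Fin n), Function.Injective f →
      ∑ k : Fin (m + 1), A (f k) (f (k + 1)) ≤ 0) := by
  constructor
  · exact fun hopt m f hf => id_optimal_aux_fwd A hdiag hopt m f hf
  · exact fun hcyc π => id_optimal_aux_bwd A hdiag hcyc π.support.card π le_rfl
end

section
/- Let A ∈ ℝ^{n×n} be normalized (zero diagonal, identity optimal). Then replacing any cycle of a permutation by fixed points does not decrease the weight: for any permutation π and any set S ⊆ [n] that is invariant under π (π(S) = S), the permutation π' which equals π off S and is the identity on S satisfies Σ_i A_{i,π'(i)} ≥ Σ_i A_{i,π(i)}. -/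
/-- In a normalized matrix, replacing any invariant set of a permutation by
fixed points does not decrease the weight. -/
theorem replace_cycle_by_fixed_points {n : ℕ} (A : Matrix (Fin n) (Fin n) ℝ)
    (hdiag : ∀ i, A i i = 0)
    (hopt : ∀ π : Equiv.Perm (Fin n), ∑ i, A i (π i) ≤ 0)
    (π : Equiv.Perm (Fin n)) (S : Finset (Fin n)) (hS : S.image π = S) :
    ∑ i, A i (π i) ≤ ∑ i, A i (if i ∈ S then i else π i) := by
  have hmem : ∀ i, i ∈ S → π i ∈ S := fun i hi => hS ▸ Finset.mem_image_of_mem π hi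
  set f : Fin n → Fin n := fun i => if i ∈ S then π i else i with hf
  have hinj : Function.Injective f := by
    intro a b h
    simp only [hf] at h
    by_cases ha : a ∈ S <;> by_cases hb : b ∈ S
    · simp only [if_pos ha, if_pos hb] at h; exact π.injective h
    · simp only [if_pos ha, if_neg hb] at h; exact absurd (h ▸ hmem a ha) hb
    · simp only [if_neg ha, if_pos hb] at h; exact absurd (h.symm ▸ hmem b hb) ha
    · simpa [ha, hb] using h
  have hbij := Finite.injective_iff_bijective.mp hinj
  let σ : Equiv.Perm (Fin n) := Equiv.ofBijective f hbij
  have hσ : ∑ i, A i (f i) ≤ 0 := by exact hopt σ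
  have hsum : ∑ i, A i (π i) = (∑ i, A i (if i ∈ S then i else π i)) + ∑ i, A i (f i)
      - ∑ i, A i i := by
    rw [← Finset.sum_add_distrib, ← Finset.sum_sub_distrib]
    apply Finset.sum_congr rfl
    intro i _
    by_cases hi : i ∈ S <;> simp [hf, hi, hdiag]
  have hzero : ∑ i, A i i = (0 : ℝ) := by simp [hdiag]
  rw [hsum, hzero]
  linarith
end

section
/- Tropical Jacobi identity: let A ∈ ℝ^{n×n} with per(A) = 0 and let I, J ⊆ [n] with |I| = |J| = k. Then either adj(A)^{∧k}_{I,J} = A^{∧(n−k)}_{Jᶜ,Iᶜ}, or there exist two distinct bijections π, σ : I → J such that Σ_{i∈I} adj(A)_{i,π(i)} = Σ_{i∈I} adj(A)_{i,σ(i)} = adj(A)^{∧k}_{I,J}. -/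
/-- The tropical (max-plus) permanent of a real `n × n` matrix. -/
noncomputable def tropPer {n : ℕ} (A : Matrix (Fin n) (Fin n) ℝ) : ℝ :=
  Finset.univ.sup' Finset.univ_nonempty fun π : Equiv.Perm (Fin n) => ∑ i, A i (π i)

/-- Tropical compound entry: the maximal weight of a bijection `I → J`,
`A^{∧k}_{I,J} = max over bijections σ : I → J of ∑_{i ∈ I} A_{i, σ(i)}`. -/
noncomputable def tropCompound {n : ℕ} (A : Matrix (Fin n) (Fin n) ℝ) (I J : Finset (Fin n))
    (h : I.card = J.card) : ℝ :=
  haveI : Nonempty ({x // x ∈ I} ≃ {x // x ∈ J}) :=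
    ⟨Fintype.equivOfCardEq (by simpa using h)⟩
  Finset.univ.sup' Finset.univ_nonempty
    fun σ : {x // x ∈ I} ≃ {x // x ∈ J} => ∑ i, A i.1 (σ i).1

/-- Tropical adjoint entry `adj(A)_{i,j} = per(A[{j}ᶜ, {i}ᶜ])`. -/
noncomputable def tropAdj {n : ℕ} (A : Matrix (Fin n) (Fin n) ℝ) (i j : Fin n) : ℝ :=
  tropCompound A ({j}ᶜ) ({i}ᶜ) (by simp [Finset.card_compl])

/-- The tropical adjoint matrix. -/
noncomputable def tropAdjM {n : ℕ} (A : Matrix (Fin n) (Fin n) ℝ) :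
    Matrix (Fin n) (Fin n) ℝ := fun i j => tropAdj A i j

namespace TJ
open Finset Equiv

variable {n : ℕ}

noncomputable def w (A : Matrix (Fin n) (Fin n) ℝ) (π : Equiv.Perm (Fin n)) : ℝ :=
  ∑ i, A i (π i)

lemma w_le {A : Matrix (Fin n) (Fin n) ℝ} (hper : tropPer A = 0) (π : Equiv.Perm (Fin n)) :
    w A π ≤ 0 := by
  have h1 : w A π ≤ tropPer A :=
    Finset.le_sup' (fun π : Equiv.Perm (Fin n) => ∑ i, A i (π i)) (Finset.mem_univ π)
  rw [hper] at h1; exact h1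

lemma exists_w_eq {A : Matrix (Fin n) (Fin n) ℝ} (hper : tropPer A = 0) :
    ∃ μ : Equiv.Perm (Fin n), w A μ = 0 := by
  obtain ⟨μ, -, hμ⟩ := Finset.exists_mem_eq_sup' (Finset.univ_nonempty)
    (fun π : Equiv.Perm (Fin n) => ∑ i, A i (π i))
  have h2 : tropPer A = w A μ := hμ
  exact ⟨μ, by rw [← h2, hper]⟩

def VOn (P Q : Finset (Fin n)) (g : Fin n → Fin n) : Prop :=
  (∀ x ∈ P, g x ∈ Q) ∧ (∀ x ∈ P, ∀ y ∈ P, g x = g y → x = y)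

noncomputable def mkPerm (f : Fin n → Fin n) (hf : Function.Injective f) :
    Equiv.Perm (Fin n) :=
  Equiv.ofBijective f (Finite.injective_iff_bijective.mp hf)

@[simp] lemma mkPerm_apply (f : Fin n → Fin n) (hf : Function.Injective f) (x : Fin n) :
    mkPerm f hf x = f x := rfl

noncomputable def toEquiv {P Q : Finset (Fin n)} (hPQ : P.card = Q.card)
    {g : Fin n → Fin n} (hg : VOn P Q g) : {x // x ∈ P} ≃ {x // x ∈ Q} :=
  Equiv.ofBijective (fun x => ⟨g x.1, hg.1 x.1 x.2⟩) (by
    rw [Fintype.bijective_iff_injective_and_card]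
    refine ⟨fun a b hab => Subtype.ext (hg.2 a.1 a.2 b.1 b.2 (by simpa using hab)), by
      simp [Fintype.card_coe, hPQ]⟩)

lemma toEquiv_apply {P Q : Finset (Fin n)} (hPQ : P.card = Q.card)
    {g : Fin n → Fin n} (hg : VOn P Q g) (x : {x // x ∈ P}) :
    (toEquiv hPQ hg x).1 = g x.1 := rfl

lemma sum_VOn_le_tropCompound (B : Matrix (Fin n) (Fin n) ℝ) {P Q : Finset (Fin n)}
    (h : P.card = Q.card) {g : Fin n → Fin n} (hg : VOn P Q g) :
    ∑ i ∈ P, B i (g i) ≤ tropCompound B P Q h := by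
  have h2 : (∑ i : {x // x ∈ P}, B i.1 ((toEquiv h hg i)).1) ≤ tropCompound B P Q h :=
    Finset.le_sup' (fun σ : {x // x ∈ P} ≃ {x // x ∈ Q} => ∑ i, B i.1 (σ i).1)
      (Finset.mem_univ (toEquiv h hg))
  rw [← Finset.sum_coe_sort P (fun i => B i (g i))]
  exact h2

lemma tropCompound_attain (B : Matrix (Fin n) (Fin n) ℝ) {P Q : Finset (Fin n)}
    (h : P.card = Q.card) :
    ∃ g : Fin n → Fin n, VOn P Q g ∧ tropCompound B P Q h = ∑ i ∈ P, B i (g i) := by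
  classical
  haveI hne : Nonempty ({x // x ∈ P} ≃ {x // x ∈ Q}) :=
    ⟨Fintype.equivOfCardEq (by simpa using h)⟩
  obtain ⟨σ, -, hσ⟩ := Finset.exists_mem_eq_sup' (Finset.univ_nonempty)
    (fun σ : {x // x ∈ P} ≃ {x // x ∈ Q} => ∑ i, B i.1 (σ i).1)
  refine ⟨fun x => if hx : x ∈ P then (σ ⟨x, hx⟩).1 else x, ⟨?_, ?_⟩, ?_⟩
  · intro x hx; simp only [dif_pos hx]; exact (σ ⟨x, hx⟩).2
  · intro x hx y hy hxy
    simp only [dif_pos hx, dif_pos hy] at hxy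
    exact congrArg Subtype.val (σ.injective (Subtype.ext hxy))
  · have h2 : tropCompound B P Q h = ∑ i : {x // x ∈ P}, B i.1 (σ i).1 := hσ
    rw [h2, ← Finset.sum_coe_sort P]
    exact Finset.sum_congr rfl fun x _ => by simp only [dif_pos x.2, Subtype.coe_eta]

lemma sum_compl_eq (s : Finset (Fin n)) (F : Fin n → ℝ) :
    ∑ x ∈ sᶜ, F x = (∑ x, F x) - ∑ x ∈ s, F x := by
  have := Finset.sum_compl_add_sum s F
  linarith

lemma image_eq {I J : Finset (Fin n)} (hIJ : I.card = J.card) {τ : Fin n → Fin n}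
    (hτ : VOn I J τ) : I.image τ = J := by
  apply Finset.eq_of_subset_of_card_le
  · intro j hj
    obtain ⟨i, hi, rfl⟩ := Finset.mem_image.mp hj
    exact hτ.1 i hi
  · rw [Finset.card_image_of_injOn (fun x hx y hy => hτ.2 x hx y hy), hIJ]

lemma restrict {A : Matrix (Fin n) (Fin n) ℝ} {I J : Finset (Fin n)} (hIJ : I.card = J.card)
    {τ : Fin n → Fin n} (hτ : VOn I J τ) (ρ : Equiv.Perm (Fin n))
    (hρ : ∀ i ∈ I, ρ (τ i) = i) :
    VOn Jᶜ Iᶜ ρ ∧ ∑ x ∈ Jᶜ, A x (ρ x) = w A ρ - ∑ i ∈ I, A (τ i) i := by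
  have himg := image_eq hIJ hτ
  constructor
  · constructor
    · intro x hx
      rw [Finset.mem_compl] at hx ⊢
      intro hc
      have h1 : τ (ρ x) ∈ J := hτ.1 _ hc
      have h2 : ρ (τ (ρ x)) = ρ x := hρ _ hc
      have h3 : τ (ρ x) = x := ρ.injective h2
      rw [h3] at h1; exact hx h1
    · exact fun x _ y _ hxy => ρ.injective hxy
  · rw [sum_compl_eq]
    have h4 : ∑ j ∈ J, A j (ρ j) = ∑ i ∈ I, A (τ i) i := by
      rw [← himg, Finset.sum_image (fun x hx y hy => hτ.2 x hx y hy)]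
      exact Finset.sum_congr rfl fun i hi => by rw [hρ i hi]
    rw [h4]; rfl

lemma card_compl_eq {P Q : Finset (Fin n)} (h : P.card = Q.card) :
    (Pᶜ : Finset (Fin n)).card = (Qᶜ : Finset (Fin n)).card := by
  simp [Finset.card_compl, h]

lemma le_tropAdj {A : Matrix (Fin n) (Fin n) ℝ} {i j : Fin n} (π : Equiv.Perm (Fin n))
    (hπ : π j = i) : w A π - A j i ≤ tropAdjM A i j := by
  have hg : VOn ({j}ᶜ) ({i}ᶜ) π := by
    constructor
    · intro x hx
      rw [Finset.mem_compl, Finset.mem_singleton] at hx ⊢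
      exact fun hc => hx (π.injective (hc.trans hπ.symm))
    · exact fun x _ y _ hxy => π.injective hxy
  have h1 := sum_VOn_le_tropCompound A (card_compl_eq (by simp : ({j} : Finset (Fin n)).card = ({i} : Finset (Fin n)).card)) hg
  have h2 : ∑ x ∈ ({j}ᶜ : Finset (Fin n)), A x (π x) = w A π - A j i := by
    rw [sum_compl_eq, Finset.sum_singleton, hπ]; rfl
  rw [h2] at h1
  exact h1

lemma tropAdj_attain (A : Matrix (Fin n) (Fin n) ℝ) (i j : Fin n) :
    ∃ π : Equiv.Perm (Fin n), π j = i ∧ tropAdjM A i j = w A π - A j i := by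
  classical
  obtain ⟨g, hg, hval⟩ := tropCompound_attain A
    (card_compl_eq (by simp : ({j} : Finset (Fin n)).card = ({i} : Finset (Fin n)).card))
  have hginj : ∀ x ≠ j, ∀ y ≠ j, g x = g y → x = y := by
    intro x hx y hy
    exact hg.2 x (by simpa [Finset.mem_compl] using hx) y (by simpa [Finset.mem_compl] using hy)
  have hgmem : ∀ x ≠ j, g x ≠ i := by
    intro x hx
    have := hg.1 x (by simpa [Finset.mem_compl] using hx)
    simpa [Finset.mem_compl] using this
  have hinj : Function.Injective (fun x => if x = j then i else g x) := by
    intro x y hxy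
    simp only at hxy
    by_cases hx : x = j <;> by_cases hy : y = j
    · rw [hx, hy]
    · rw [if_pos hx, if_neg hy] at hxy
      exact absurd hxy.symm (hgmem y hy)
    · rw [if_neg hx, if_pos hy] at hxy
      exact absurd hxy (hgmem x hx)
    · rw [if_neg hx, if_neg hy] at hxy
      exact hginj x hx y hy hxy
  refine ⟨mkPerm _ hinj, by simp [mkPerm], ?_⟩
  have hadj : tropAdjM A i j = ∑ x ∈ ({j}ᶜ : Finset (Fin n)), A x (g x) := hval
  have h2 : ∑ x ∈ ({j}ᶜ : Finset (Fin n)), A x (g x)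
      = ∑ x ∈ ({j}ᶜ : Finset (Fin n)), A x ((mkPerm _ hinj) x) := by
    apply Finset.sum_congr rfl
    intro x hx
    rw [Finset.mem_compl, Finset.mem_singleton] at hx
    simp [mkPerm, if_neg hx]
  have h3 : ∑ x ∈ ({j}ᶜ : Finset (Fin n)), A x ((mkPerm _ hinj) x)
      = w A (mkPerm _ hinj) - A j i := by
    rw [sum_compl_eq, Finset.sum_singleton]
    have : (mkPerm _ hinj) j = i := by simp [mkPerm]
    rw [this]; rfl
  rw [hadj, h2, h3]

lemma merge {A : Matrix (Fin n) (Fin n) ℝ} (hper : tropPer A = 0)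
    (φ ψ : Equiv.Perm (Fin n)) (b : Fin n) :
    ∃ ρ : Equiv.Perm (Fin n),
      (∀ x, (ψ⁻¹ * φ).SameCycle b x → ρ x = ψ x) ∧
      (∀ x, ¬(ψ⁻¹ * φ).SameCycle b x → ρ x = φ x) ∧
      w A φ + w A ψ ≤ w A ρ := by
  classical
  set ζ := ψ⁻¹ * φ with hζ
  have key : ∀ x y : Fin n, ζ.SameCycle b x → ¬ζ.SameCycle b y → ψ x ≠ φ y := by
    intro x y hx hy hc
    have hz : ψ (ζ y) = φ y := by rw [hζ]; simp [Equiv.Perm.mul_apply]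
    have h1 : x = ζ y := ψ.injective (by rw [hz]; exact hc)
    rw [h1] at hx
    exact hy (Equiv.Perm.sameCycle_apply_right.mp hx)
  have hinj1 : Function.Injective (fun x => if ζ.SameCycle b x then ψ x else φ x) := by
    intro x y hxy
    simp only at hxy
    by_cases hx : ζ.SameCycle b x <;> by_cases hy : ζ.SameCycle b y
    · rw [if_pos hx, if_pos hy] at hxy; exact ψ.injective hxy
    · rw [if_pos hx, if_neg hy] at hxy; exact absurd hxy (key x y hx hy)
    · rw [if_neg hx, if_pos hy] at hxy; exact absurd hxy.symm (key y x hy hx)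
    · rw [if_neg hx, if_neg hy] at hxy; exact φ.injective hxy
  have key2 : ∀ x y : Fin n, ζ.SameCycle b x → ¬ζ.SameCycle b y → φ x ≠ ψ y := by
    intro x y hx hy hc
    have hz : ψ (ζ x) = φ x := by rw [hζ]; simp [Equiv.Perm.mul_apply]
    have h1 : y = ζ x := ψ.injective (by rw [hz]; exact hc.symm)
    rw [h1] at hy
    exact hy (Equiv.Perm.sameCycle_apply_right.mpr hx)
  have hinj2 : Function.Injective (fun x => if ζ.SameCycle b x then φ x else ψ x) := by
    intro x y hxy
    simp only at hxy
    by_cases hx : ζ.SameCycle b x <;> by_cases hy : ζ.SameCycle b y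
    · rw [if_pos hx, if_pos hy] at hxy; exact φ.injective hxy
    · rw [if_pos hx, if_neg hy] at hxy; exact absurd hxy (key2 x y hx hy)
    · rw [if_neg hx, if_pos hy] at hxy; exact absurd hxy.symm (key2 y x hy hx)
    · rw [if_neg hx, if_neg hy] at hxy; exact ψ.injective hxy
  refine ⟨mkPerm _ hinj1, ?_, ?_, ?_⟩
  · intro x hx; simp [mkPerm, if_pos hx]
  · intro x hx; simp [mkPerm, if_neg hx]
  · have hsum : w A (mkPerm _ hinj1) + w A (mkPerm _ hinj2) = w A φ + w A ψ := by
      rw [w, w, w, w, ← Finset.sum_add_distrib, ← Finset.sum_add_distrib]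
      apply Finset.sum_congr rfl
      intro x _
      by_cases hx : ζ.SameCycle b x
      · simp only [mkPerm_apply, if_pos hx]; ring
      · simp only [mkPerm_apply, if_neg hx]
    have := w_le hper (mkPerm _ hinj2)
    linarith

lemma exchange (A : Matrix (Fin n) (Fin n) ℝ) (φ ψ : Equiv.Perm (Fin n)) (a b : Fin n)
    (hab : a ≠ b) (m : ℕ) (hm : 0 < m) (hmb : ((ψ⁻¹ * φ)^m) a = b)
    (hmin : ∀ t, 0 < t → t < m → ((ψ⁻¹ * φ)^t) a ≠ b) :
    ∃ σ1 σ2 : Equiv.Perm (Fin n),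
      σ1 a = ψ b ∧ σ2 b = φ a ∧
      (∀ x, (∀ t, t < m → x ≠ ((ψ⁻¹ * φ)^t) a) → σ1 x = φ x) ∧
      w A σ1 + w A σ2
        = w A φ + w A ψ - A a (φ a) - A b (ψ b) + A a (ψ b) + A b (φ a) := by
  classical
  set u : ℕ → Fin n := fun t => ((ψ⁻¹ * φ)^t) a with hu
  have hu0 : u 0 = a := by simp [hu]
  have humb : u m = b := hmb
  have huchain : ∀ t, ψ (u (t+1)) = φ (u t) := by
    intro t
    have h1 : u (t+1) = (ψ⁻¹ * φ) (u t) := by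
      show ((ψ⁻¹*φ)^(t+1)) a = _
      rw [pow_succ']
      rfl
    rw [h1]
    simp [Equiv.Perm.mul_apply]
  have uaux : ∀ s t, s < t → t ≤ m → u s ≠ u t := by
    intro s t hst htm heq
    have h1 : u (m - t + s) = b := by
      have h2 : ((ψ⁻¹*φ)^(m-t)) (u t) = b := by
        show ((ψ⁻¹*φ)^(m-t)) (((ψ⁻¹*φ)^t) a) = b
        rw [← Equiv.Perm.mul_apply, ← pow_add, Nat.sub_add_cancel htm]
        exact hmb
      rw [← heq] at h2
      show ((ψ⁻¹*φ)^(m-t+s)) a = b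
      rw [pow_add, Equiv.Perm.mul_apply]
      exact h2
    by_cases hz : m - t + s = 0
    · rw [hz, hu0] at h1
      exact hab h1
    · exact hmin _ (by omega) (by omega) h1
  have uinj : ∀ s t, s ≤ m → t ≤ m → u s = u t → s = t := by
    intro s t hs ht heq
    rcases lt_trichotomy s t with h|h|h
    · exact absurd heq (uaux s t h ht)
    · exact h
    · exact absurd heq.symm (uaux t s h hs)
  set L : List (Fin n) := (List.range m).map u with hL
  set L2 : List (Fin n) := (List.range m).map (fun t => u (t+1)) with hL2
  have hlenL : L.length = m := by simp [hL]
  have hlenL2 : L2.length = m := by simp [hL2]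
  have memL : ∀ x, x ∈ L ↔ ∃ t, t < m ∧ u t = x := by
    intro x; simp [hL, List.mem_map, List.mem_range]
  have memL2 : ∀ x, x ∈ L2 ↔ ∃ t, t < m ∧ u (t+1) = x := by
    intro x; simp [hL2, List.mem_map, List.mem_range]
  have nodupL : L.Nodup := by
    apply List.Nodup.map_on ?_ List.nodup_range
    intro x hx y hy hxy
    rw [List.mem_range] at hx hy
    exact uinj x y (by omega) (by omega) hxy
  have nodupL2 : L2.Nodup := by
    apply List.Nodup.map_on ?_ List.nodup_range
    intro x hx y hy hxy
    rw [List.mem_range] at hx hy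
    have := uinj (x+1) (y+1) (by omega) (by omega) hxy
    omega
  have fpL_u : ∀ t, t < m → L.formPerm (u t) = u ((t+1) % m) := by
    intro t ht
    have h1 := List.formPerm_apply_getElem L nodupL t (by rw [hlenL]; exact ht)
    have e1 : L[t]'(by rw [hlenL]; exact ht) = u t := by
      simp [hL, List.getElem_map, List.getElem_range]
    have hmod : (t+1) % L.length < L.length := Nat.mod_lt _ (by rw [hlenL]; exact hm)
    have e2 : L[(t+1) % L.length]'hmod = u ((t+1) % m) := by
      simp [hL, List.getElem_map, List.getElem_range, hlenL]
    rw [e1, e2] at h1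
    exact h1
  have fpL2_u : ∀ t, t < m → L2.formPerm (u (t+1)) = u ((t+1) % m + 1) := by
    intro t ht
    have h1 := List.formPerm_apply_getElem L2 nodupL2 t (by rw [hlenL2]; exact ht)
    have e1 : L2[t]'(by rw [hlenL2]; exact ht) = u (t+1) := by
      simp [hL2, List.getElem_map, List.getElem_range]
    have hmod : (t+1) % L2.length < L2.length := Nat.mod_lt _ (by rw [hlenL2]; exact hm)
    have e2 : L2[(t+1) % L2.length]'hmod = u ((t+1) % m + 1) := by
      simp [hL2, List.getElem_map, List.getElem_range, hlenL2]
    rw [e1, e2] at h1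
    exact h1
  set σ1 : Equiv.Perm (Fin n) := φ * (L.formPerm)⁻¹ with hσ1
  set σ2 : Equiv.Perm (Fin n) := ψ * L2.formPerm with hσ2
  have hoff1 : ∀ x, x ∉ L → σ1 x = φ x := by
    intro x hx
    have h1 : L.formPerm x = x := List.formPerm_apply_of_notMem hx
    have h2 : (L.formPerm)⁻¹ x = x := Equiv.Perm.inv_eq_iff_eq.mpr h1.symm
    rw [hσ1, Equiv.Perm.mul_apply, h2]
  have hoff2 : ∀ x, x ∉ L2 → σ2 x = ψ x := by
    intro x hx
    rw [hσ2, Equiv.Perm.mul_apply, List.formPerm_apply_of_notMem hx]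
  have happ1 : ∀ t, 1 ≤ t → t < m → σ1 (u t) = φ (u (t-1)) := by
    intro t h1t htm
    have h1 : L.formPerm (u (t-1)) = u t := by
      rw [fpL_u (t-1) (by omega), show t - 1 + 1 = t by omega, Nat.mod_eq_of_lt htm]
    have h2 : (L.formPerm)⁻¹ (u t) = u (t-1) := Equiv.Perm.inv_eq_iff_eq.mpr h1.symm
    rw [hσ1, Equiv.Perm.mul_apply, h2]
  have happ1a : σ1 a = ψ b := by
    have h1 : L.formPerm (u (m-1)) = u 0 := by
      rw [fpL_u (m-1) (by omega), show m - 1 + 1 = m by omega, Nat.mod_self]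
    have h2 : (L.formPerm)⁻¹ (u 0) = u (m-1) := Equiv.Perm.inv_eq_iff_eq.mpr h1.symm
    have h3 : σ1 a = φ (u (m-1)) := by
      rw [← hu0, hσ1, Equiv.Perm.mul_apply, h2]
    rw [h3, ← huchain (m-1)]
    congr 1
    rw [show m - 1 + 1 = m by omega]
    exact hmb
  have happ2 : ∀ s, 1 ≤ s → s < m → σ2 (u s) = ψ (u (s+1)) := by
    intro s h1s hsm
    have h1 : L2.formPerm (u s) = u (s+1) := by
      have := fpL2_u (s-1) (by omega)
      rw [show s - 1 + 1 = s by omega] at this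
      rw [this, Nat.mod_eq_of_lt hsm]
    rw [hσ2, Equiv.Perm.mul_apply, h1]
  have happ2b : σ2 b = φ a := by
    have h1 : L2.formPerm (u m) = u 1 := by
      have := fpL2_u (m-1) (by omega)
      rw [show m - 1 + 1 = m by omega] at this
      rw [this, Nat.mod_self]
    have h2 : σ2 b = ψ (u 1) := by
      rw [← hmb]
      show σ2 (u m) = _
      rw [hσ2, Equiv.Perm.mul_apply, h1]
    rw [h2, huchain 0, hu0]
  have haL2 : a ∉ L2 := by
    rw [memL2]
    rintro ⟨t, htm, heq⟩
    have := uinj (t+1) 0 (by omega) (by omega) (by rw [heq, hu0])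
    omega
  have hbL : b ∉ L := by
    rw [memL]
    rintro ⟨t, htm, heq⟩
    by_cases ht0 : t = 0
    · rw [ht0, hu0] at heq
      exact hab heq
    · exact hmin t (by omega) htm heq
  -- pointwise difference vanishes off {a, b}
  have dzero : ∀ x : Fin n, x ≠ a → x ≠ b →
      A x (σ1 x) + A x (σ2 x) = A x (φ x) + A x (ψ x) := by
    intro x hxa hxb
    by_cases hxL : x ∈ L
    · obtain ⟨t, htm, heq⟩ := (memL x).mp hxL
      have ht0 : 1 ≤ t := by
        rcases Nat.eq_zero_or_pos t with h|h
        · rw [h, hu0] at heq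
          exact absurd heq.symm hxa
        · exact h
      have e1 : σ1 x = ψ x := by
        rw [← heq, happ1 t ht0 htm, ← huchain (t-1), show t - 1 + 1 = t by omega]
      have e2 : σ2 x = φ x := by
        rw [← heq, happ2 t ht0 htm, huchain t]
      rw [e1, e2]
      ring
    · have hxL2 : x ∉ L2 := by
        rw [memL2]
        rintro ⟨t, htm, heq⟩
        by_cases htm' : t + 1 < m
        · exact hxL ((memL x).mpr ⟨t+1, htm', heq⟩)
        · have : t + 1 = m := by omega
          rw [this, humb] at heq
          exact hxb heq.symm
      rw [hoff1 x hxL, hoff2 x hxL2]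
  refine ⟨σ1, σ2, happ1a, happ2b, ?_, ?_⟩
  · intro x hx
    apply hoff1
    rw [memL]
    rintro ⟨t, htm, heq⟩
    exact hx t htm heq.symm
  · have hsplit : w A σ1 + w A σ2 - (w A φ + w A ψ)
        = ∑ x : Fin n, (A x (σ1 x) + A x (σ2 x) - A x (φ x) - A x (ψ x)) := by
      rw [w, w, w, w]
      rw [Finset.sum_sub_distrib, Finset.sum_sub_distrib, Finset.sum_add_distrib]
      ring
    have hres : ∑ x : Fin n, (A x (σ1 x) + A x (σ2 x) - A x (φ x) - A x (ψ x))
        = ∑ x ∈ ({a, b} : Finset (Fin n)),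
            (A x (σ1 x) + A x (σ2 x) - A x (φ x) - A x (ψ x)) := by
      refine (Finset.sum_subset (Finset.subset_univ _) ?_).symm
      intro x _ hx
      simp only [Finset.mem_insert, Finset.mem_singleton, not_or] at hx
      have := dzero x hx.1 hx.2
      linarith
    rw [Finset.sum_pair hab] at hres
    have e1 : σ2 a = ψ a := hoff2 a haL2
    have e2 : σ1 b = φ b := hoff1 b hbL
    rw [happ1a, happ2b, e1, e2] at hres
    rw [hres] at hsplit
    linarith

set_option maxHeartbeats 1000000 in
lemma walk {A : Matrix (Fin n) (Fin n) ℝ} (hper : tropPer A = 0)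
    (μ : Equiv.Perm (Fin n)) (hμ : w A μ = 0)
    {I J : Finset (Fin n)} (h : I.card = J.card) {g : Fin n → Fin n}
    (hg : VOn Jᶜ Iᶜ g) :
    ∑ x ∈ Jᶜ, A x (g x) ≤ tropCompound (tropAdjM A) I J h := by
  classical
  have hcc : (Jᶜ : Finset (Fin n)).card = (Iᶜ : Finset (Fin n)).card := card_compl_eq h.symm
  set γe : {x // x ∈ (Jᶜ : Finset (Fin n))} ≃ {x // x ∈ (Iᶜ : Finset (Fin n))} :=
    toEquiv hcc hg with hγe
  set gInv : Fin n → Fin n :=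
    fun c => if hc : c ∈ (Iᶜ : Finset (Fin n)) then (γe.symm ⟨c, hc⟩).1 else c with hgInvdef
  have hgInv_mem : ∀ c ∈ (Iᶜ : Finset (Fin n)), gInv c ∈ (Jᶜ : Finset (Fin n)) := by
    intro c hc; rw [hgInvdef]; simp only [dif_pos hc]; exact (γe.symm ⟨c, hc⟩).2
  have hg_gInv : ∀ c ∈ (Iᶜ : Finset (Fin n)), g (gInv c) = c := by
    intro c hc
    have h1 : γe (γe.symm ⟨c, hc⟩) = ⟨c, hc⟩ := γe.apply_symm_apply _
    have h2 : (γe (γe.symm ⟨c, hc⟩)).1 = g ((γe.symm ⟨c, hc⟩).1) := rfl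
    rw [hgInvdef]; simp only [dif_pos hc]
    rw [← h2, h1]
  -- the walk
  set step : Fin n → Fin n :=
    fun c => if c ∈ (Iᶜ : Finset (Fin n)) then μ (gInv c) else c with hstepdef
  set seq : Fin n → ℕ → Fin n := fun j t => step^[t] (μ j) with hseqdef
  have hseq0 : ∀ j, seq j 0 = μ j := fun j => rfl
  have hseqS : ∀ j t, seq j t ∈ (Iᶜ : Finset (Fin n)) →
      seq j (t+1) = μ (gInv (seq j t)) := by
    intro j t ht
    rw [hseqdef]
    simp only
    rw [Function.iterate_succ_apply']
    rw [hstepdef]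
    exact if_pos ht
  have WInj : ∀ t (j : Fin n), j ∈ J → ∀ (j' : Fin n), j' ∈ J → ∀ t',
      (∀ s, s < t → seq j s ∈ (Iᶜ : Finset (Fin n))) →
      (∀ s, s < t' → seq j' s ∈ (Iᶜ : Finset (Fin n))) →
      seq j t = seq j' t' → j = j' ∧ t = t' := by
    intro t
    induction t with
    | zero =>
      intro j hj j' hj' t' _ hc' heq
      cases t' with
      | zero =>
        refine ⟨μ.injective ?_, rfl⟩
        rw [← hseq0 j, ← hseq0 j', heq]
      | succ s =>
        exfalso
        have h1 : seq j' (s+1) = μ (gInv (seq j' s)) := hseqS j' s (hc' s (by omega))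
        have h2 : μ j = μ (gInv (seq j' s)) := by rw [← hseq0 j, heq, h1]
        have h3 : j = gInv (seq j' s) := μ.injective h2
        have h4 := hgInv_mem _ (hc' s (by omega))
        rw [← h3, Finset.mem_compl] at h4
        exact h4 hj
    | succ r ih =>
      intro j hj j' hj' t' hc hc' heq
      cases t' with
      | zero =>
        exfalso
        have h1 : seq j (r+1) = μ (gInv (seq j r)) := hseqS j r (hc r (by omega))
        have h2 : μ j' = μ (gInv (seq j r)) := by rw [← hseq0 j', ← heq, h1]
        have h3 : j' = gInv (seq j r) := μ.injective h2
        have h4 := hgInv_mem _ (hc r (by omega))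
        rw [← h3, Finset.mem_compl] at h4
        exact h4 hj'
      | succ s =>
        have h1 : seq j (r+1) = μ (gInv (seq j r)) := hseqS j r (hc r (by omega))
        have h2 : seq j' (s+1) = μ (gInv (seq j' s)) := hseqS j' s (hc' s (by omega))
        rw [h1, h2] at heq
        have h3 : gInv (seq j r) = gInv (seq j' s) := μ.injective heq
        have h4 : seq j r = seq j' s := by
          rw [← hg_gInv _ (hc r (by omega)), ← hg_gInv _ (hc' s (by omega)), h3]
        obtain ⟨hjj, hrs⟩ := ih j hj j' hj' s
          (fun q hq => hc q (by omega)) (fun q hq => hc' q (by omega)) h4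
        exact ⟨hjj, by omega⟩
  -- termination
  have hterm : ∀ j ∈ J, ∃ t, seq j t ∉ (Iᶜ : Finset (Fin n)) := by
    intro j hj
    by_contra hcon
    push_neg at hcon
    have hcinj : ∀ t ∈ Finset.range (n+1), ∀ t' ∈ Finset.range (n+1),
        seq j t = seq j t' → t = t' := by
      intro t _ t' _ heq
      exact (WInj t j hj j hj t' (fun s _ => hcon s) (fun s _ => hcon s) heq).2
    have h1 : ((Finset.range (n+1)).image (seq j)).card = n+1 := by
      rw [Finset.card_image_of_injOn (fun t ht t' ht' => hcinj t ht t' ht'), Finset.card_range]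
    have h2 : ((Finset.range (n+1)).image (seq j)).card ≤ n := by
      have := Finset.card_le_univ ((Finset.range (n+1)).image (seq j))
      simpa using this
    omega
  set T : Fin n → ℕ := fun j => if hj : ∃ t, seq j t ∉ (Iᶜ : Finset (Fin n))
    then Nat.find hj else 0 with hTdef
  have hT1 : ∀ j ∈ J, seq j (T j) ∉ (Iᶜ : Finset (Fin n)) := by
    intro j hj
    rw [hTdef]
    simp only [dif_pos (hterm j hj)]
    exact Nat.find_spec (hterm j hj)
  have hT2 : ∀ j ∈ J, ∀ s, s < T j → seq j s ∈ (Iᶜ : Finset (Fin n)) := by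
    intro j hj s hs
    rw [hTdef] at hs
    simp only [dif_pos (hterm j hj)] at hs
    have := Nat.find_min (hterm j hj) hs
    exact not_not.mp this
  set endM : Fin n → Fin n := fun j => seq j (T j) with henddef
  have hendI : ∀ j ∈ J, endM j ∈ I := by
    intro j hj
    have := hT1 j hj
    rw [Finset.mem_compl] at this
    exact not_not.mp this
  have hendInj : ∀ j ∈ J, ∀ j' ∈ J, endM j = endM j' → j = j' := by
    intro j hj j' hj' heq
    exact (WInj (T j) j hj j' hj' (T j') (hT2 j hj) (hT2 j' hj') heq).1
  have himgEnd : J.image endM = I := by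
    apply Finset.eq_of_subset_of_card_le
    · intro i hi
      obtain ⟨j, hj, rfl⟩ := Finset.mem_image.mp hi
      exact hendI j hj
    · rw [Finset.card_image_of_injOn (fun x hx y hy => hendInj x hx y hy), ← h]
  -- τ : I → J
  have hpre : ∀ i ∈ I, ∃ j, j ∈ J ∧ endM j = i := by
    intro i hi
    rw [← himgEnd] at hi
    obtain ⟨j, hj, hji⟩ := Finset.mem_image.mp hi
    exact ⟨j, hj, hji⟩
  set τ : Fin n → Fin n :=
    fun i => if hi : ∃ j, j ∈ J ∧ endM j = i then hi.choose else i with hτdef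
  have hτJ : ∀ i ∈ I, τ i ∈ J := by
    intro i hi
    rw [hτdef]
    simp only [dif_pos (hpre i hi)]
    exact (hpre i hi).choose_spec.1
  have hτend : ∀ i ∈ I, endM (τ i) = i := by
    intro i hi
    rw [hτdef]
    simp only [dif_pos (hpre i hi)]
    exact (hpre i hi).choose_spec.2
  have hτ : VOn I J τ := by
    refine ⟨hτJ, fun x hx y hy hxy => ?_⟩
    rw [← hτend x hx, ← hτend y hy, hxy]
  have hτe : ∀ j ∈ J, τ (endM j) = j := by
    intro j hj
    have h1 : endM j ∈ I := hendI j hj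
    exact hendInj _ (hτJ _ h1) _ hj (hτend _ h1)
  -- per-walk rows
  set R : Fin n → Finset (Fin n) :=
    fun j => (Finset.range (T j)).image (fun s => gInv (seq j s)) with hRdef
  have hRJc : ∀ j ∈ J, ∀ x ∈ R j, x ∈ (Jᶜ : Finset (Fin n)) := by
    intro j hj x hx
    rw [hRdef] at hx
    obtain ⟨s, hs, rfl⟩ := Finset.mem_image.mp hx
    exact hgInv_mem _ (hT2 j hj s (Finset.mem_range.mp hs))
  have hRinj : ∀ j ∈ J, ∀ s < T j, ∀ s' < T j,
      gInv (seq j s) = gInv (seq j s') → s = s' := by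
    intro j hj s hs s' hs' heq
    have h4 : seq j s = seq j s' := by
      rw [← hg_gInv _ (hT2 j hj s hs), ← hg_gInv _ (hT2 j hj s' hs'), heq]
    exact (WInj s j hj j hj s' (fun q hq => hT2 j hj q (by omega))
      (fun q hq => hT2 j hj q (by omega)) h4).2
  -- cross-walk disjointness
  have hRdisj : ∀ j ∈ J, ∀ j' ∈ J, j ≠ j' → ∀ x, x ∈ R j → x ∈ R j' → False := by
    intro j hj j' hj' hne x hx hx'
    rw [hRdef] at hx hx'
    obtain ⟨s, hs, heq⟩ := Finset.mem_image.mp hx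
    obtain ⟨s', hs', heq'⟩ := Finset.mem_image.mp hx'
    rw [Finset.mem_range] at hs hs'
    have h4 : seq j s = seq j' s' := by
      rw [← hg_gInv _ (hT2 j hj s hs), ← hg_gInv _ (hT2 j' hj' s' hs'), heq, heq']
    exact hne (WInj s j hj j' hj' s' (fun q hq => hT2 j hj q (by omega))
      (fun q hq => hT2 j' hj' q (by omega)) h4).1
  -- per-walk lists and permutations
  set Lw : Fin n → List (Fin n) :=
    fun j => j :: (List.range (T j)).map (fun s => gInv (seq j s)) with hLwdef
  have memLw : ∀ j, ∀ x, x ∈ Lw j ↔ x = j ∨ x ∈ R j := by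
    intro j x
    rw [hLwdef, hRdef]
    simp only [List.mem_cons, List.mem_map, List.mem_range, Finset.mem_image,
      Finset.mem_range]
  have hjR : ∀ j ∈ J, j ∉ R j := by
    intro j hj hcon
    have := hRJc j hj j hcon
    rw [Finset.mem_compl] at this
    exact this hj
  have nodupLw : ∀ j ∈ J, (Lw j).Nodup := by
    intro j hj
    rw [hLwdef]
    rw [List.nodup_cons]
    constructor
    · intro hcon
      rw [List.mem_map] at hcon
      obtain ⟨s, hs, heq⟩ := hcon
      rw [List.mem_range] at hs
      have h1 := hgInv_mem _ (hT2 j hj s hs)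
      rw [heq, Finset.mem_compl] at h1
      exact h1 hj
    · apply List.Nodup.map_on ?_ List.nodup_range
      intro x hx y hy hxy
      rw [List.mem_range] at hx hy
      exact hRinj j hj x hx y hy hxy
  have hlenLw : ∀ j, (Lw j).length = T j + 1 := by
    intro j; rw [hLwdef]; simp
  set πw : Fin n → Equiv.Perm (Fin n) := fun j => μ * ((Lw j).formPerm)⁻¹ with hπwdef
  have getLw0 : ∀ j (hlt : 0 < (Lw j).length), (Lw j)[0]'hlt = j := by
    intro j hlt
    simp [hLwdef]
  have getLwS : ∀ j s (hlt : s + 1 < (Lw j).length), (Lw j)[s+1]'hlt = gInv (seq j s) := by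
    intro j s hlt
    simp [hLwdef]
  have hμLw : ∀ j ∈ J, ∀ t, (ht : t < (Lw j).length) →
      μ ((Lw j)[t]'ht) = seq j t := by
    intro j hj t ht
    cases t with
    | zero => rw [getLw0]; exact (hseq0 j).symm
    | succ s =>
      rw [getLwS j s ht]
      have hs : s < T j := by have := hlenLw j; omega
      exact (hseqS j s (hT2 j hj s hs)).symm
  have happ_j : ∀ j ∈ J, πw j j = endM j := by
    intro j hj
    have hl : (Lw j).length = T j + 1 := hlenLw j
    have h1 := List.formPerm_apply_getElem (Lw j) (nodupLw j hj) (T j) (by omega)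
    have e2 : (T j + 1) % (Lw j).length = 0 := by rw [hl]; exact Nat.mod_self _
    simp only [e2] at h1
    rw [getLw0 j (by omega)] at h1
    have h2 : ((Lw j).formPerm)⁻¹ j = (Lw j)[T j]'(by omega) :=
      Equiv.Perm.inv_eq_iff_eq.mpr h1.symm
    rw [hπwdef]
    simp only [Equiv.Perm.mul_apply]
    rw [h2, hμLw j hj (T j) (by omega)]
  have happ_g : ∀ j ∈ J, ∀ x ∈ R j, πw j x = g x := by
    intro j hj x hx
    rw [hRdef] at hx
    obtain ⟨s, hs, rfl⟩ := Finset.mem_image.mp hx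
    rw [Finset.mem_range] at hs
    have hl : (Lw j).length = T j + 1 := hlenLw j
    have h1 := List.formPerm_apply_getElem (Lw j) (nodupLw j hj) s (by omega)
    have e2 : (s + 1) % (Lw j).length = s + 1 := by
      rw [hl]; exact Nat.mod_eq_of_lt (by omega)
    simp only [e2] at h1
    rw [getLwS j s (by omega)] at h1
    have h2 : ((Lw j).formPerm)⁻¹ (gInv (seq j s)) = (Lw j)[s]'(by omega) :=
      Equiv.Perm.inv_eq_iff_eq.mpr h1.symm
    rw [hπwdef]
    simp only [Equiv.Perm.mul_apply]
    rw [h2, hμLw j hj s (by omega), hg_gInv _ (hT2 j hj s hs)]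
  have hoff_j : ∀ j, ∀ x, x ∉ Lw j → πw j x = μ x := by
    intro j x hx
    have h1 : (Lw j).formPerm x = x := List.formPerm_apply_of_notMem hx
    have h2 : ((Lw j).formPerm)⁻¹ x = x := Equiv.Perm.inv_eq_iff_eq.mpr h1.symm
    rw [hπwdef]
    simp only [Equiv.Perm.mul_apply]
    rw [h2]
  -- weight split helper
  have hwsplit : ∀ (π : Equiv.Perm (Fin n)) (S : Finset (Fin n)),
      (∀ x, x ∉ S → π x = μ x) →
      w A π = ∑ x ∈ S, (A x (π x) - A x (μ x)) := by
    intro π S hoff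
    have h1 : w A π - w A μ = ∑ x : Fin n, (A x (π x) - A x (μ x)) := by
      rw [w, w, Finset.sum_sub_distrib]
    have h2 : ∑ x : Fin n, (A x (π x) - A x (μ x))
        = ∑ x ∈ S, (A x (π x) - A x (μ x)) := by
      refine (Finset.sum_subset (Finset.subset_univ S) ?_).symm
      intro x _ hx
      rw [hoff x hx]
      ring
    rw [hμ] at h1
    linarith [h1, h2]
  -- per-walk adjoint bound
  have hadjb : ∀ j ∈ J,
      -A j (μ j) + ∑ x ∈ R j, (A x (g x) - A x (μ x)) ≤ tropAdjM A (endM j) j := by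
    intro j hj
    have hoffS : ∀ x, x ∉ insert j (R j) → πw j x = μ x := by
      intro x hx
      apply hoff_j
      rw [memLw]
      intro hcon
      rcases hcon with h | h
      · exact hx (Finset.mem_insert.mpr (Or.inl h))
      · exact hx (Finset.mem_insert.mpr (Or.inr h))
    have h1 := hwsplit (πw j) (insert j (R j)) hoffS
    rw [Finset.sum_insert (hjR j hj)] at h1
    have h2 : ∑ x ∈ R j, (A x (πw j x) - A x (μ x))
        = ∑ x ∈ R j, (A x (g x) - A x (μ x)) := by
      apply Finset.sum_congr rfl
      intro x hx
      rw [happ_g j hj x hx]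
    rw [h2, happ_j j hj] at h1
    have h3 := le_tropAdj (A := A) (πw j) (happ_j j hj)
    rw [h1] at h3
    linarith [h3]
  -- reindex the target sum over J
  have hsum1 : ∑ i ∈ I, tropAdjM A i (τ i) = ∑ j ∈ J, tropAdjM A (endM j) j := by
    rw [← himgEnd, Finset.sum_image (fun x hx y hy => hendInj x hx y hy)]
    apply Finset.sum_congr rfl
    intro j hj
    rw [hτe j hj]
  have hsum2 : ∑ j ∈ J, (-A j (μ j) + ∑ x ∈ R j, (A x (g x) - A x (μ x)))
      ≤ ∑ j ∈ J, tropAdjM A (endM j) j := Finset.sum_le_sum hadjb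
  -- biUnion of walk rows
  set RR : Finset (Fin n) := J.biUnion R with hRRdef
  have hdisjPW : (↑J : Set (Fin n)).PairwiseDisjoint R := by
    intro j hj j' hj' hne
    rw [Function.onFun, Finset.disjoint_left]
    intro x hx hx'
    exact hRdisj j (Finset.mem_coe.mp hj) j' (Finset.mem_coe.mp hj') hne x hx hx'
  have hbiu : ∑ x ∈ RR, (A x (g x) - A x (μ x))
      = ∑ j ∈ J, ∑ x ∈ R j, (A x (g x) - A x (μ x)) := by
    rw [hRRdef]
    exact Finset.sum_biUnion hdisjPW
  have hRRJc : RR ⊆ (Jᶜ : Finset (Fin n)) := by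
    intro x hx
    rw [hRRdef] at hx
    obtain ⟨j, hj, hxj⟩ := Finset.mem_biUnion.mp hx
    exact hRJc j hj x hxj
  -- the comparison permutation ν
  set S1 : Finset (Fin n) := (Jᶜ : Finset (Fin n)) \ RR with hS1def
  have hkey : ∀ y : Fin n, (y ∈ J ∨ y ∈ RR) → μ y ∈ (Iᶜ : Finset (Fin n)) →
      ∃ r ∈ RR, g r = μ y := by
    intro y hy hμy
    rcases hy with hyJ | hyR
    · have hT0 : 0 < T y := by
        rcases Nat.eq_zero_or_pos (T y) with h0 | h0
        · exfalso
          have := hT1 y hyJ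
          rw [h0] at this
          exact this (by rw [hseq0]; exact hμy)
        · exact h0
      refine ⟨gInv (seq y 0), ?_, ?_⟩
      · rw [hRRdef]
        apply Finset.mem_biUnion.mpr
        refine ⟨y, hyJ, ?_⟩
        rw [hRdef]
        exact Finset.mem_image.mpr ⟨0, Finset.mem_range.mpr hT0, rfl⟩
      · rw [hg_gInv _ (by rw [hseq0]; exact hμy), hseq0]
    · rw [hRRdef] at hyR
      obtain ⟨j, hj, hyj⟩ := Finset.mem_biUnion.mp hyR
      rw [hRdef] at hyj
      obtain ⟨s, hs, rfl⟩ := Finset.mem_image.mp hyj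
      rw [Finset.mem_range] at hs
      have hμval : μ (gInv (seq j s)) = seq j (s+1) := (hseqS j s (hT2 j hj s hs)).symm
      have hs1 : s + 1 < T j := by
        rcases Nat.lt_or_ge (s+1) (T j) with h0 | h0
        · exact h0
        · exfalso
          have hTj : s + 1 = T j := by omega
          have := hT1 j hj
          rw [← hTj] at this
          rw [hμval] at hμy
          exact this hμy
      refine ⟨gInv (seq j (s+1)), ?_, ?_⟩
      · rw [hRRdef]
        apply Finset.mem_biUnion.mpr
        refine ⟨j, hj, ?_⟩
        rw [hRdef]
        exact Finset.mem_image.mpr ⟨s+1, Finset.mem_range.mpr hs1, rfl⟩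
      · rw [hg_gInv _ (hT2 j hj (s+1) hs1), hμval]
  have hnotS1 : ∀ y : Fin n, y ∉ S1 → y ∈ J ∨ y ∈ RR := by
    intro y hy
    rw [hS1def, Finset.mem_sdiff, Finset.mem_compl] at hy
    by_cases hyJ : y ∈ J
    · exact Or.inl hyJ
    · right
      by_contra hyR
      exact hy ⟨hyJ, hyR⟩
  have hinjν : Function.Injective
      (fun x => if x ∈ S1 then g x else μ x) := by
    intro x y hxy
    simp only at hxy
    have hmemS1 : ∀ z, z ∈ S1 → z ∈ (Jᶜ : Finset (Fin n)) := by
      intro z hz; rw [hS1def, Finset.mem_sdiff] at hz; exact hz.1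
    by_cases hx : x ∈ S1 <;> by_cases hy : y ∈ S1
    · rw [if_pos hx, if_pos hy] at hxy
      exact hg.2 x (hmemS1 x hx) y (hmemS1 y hy) hxy
    · exfalso
      rw [if_pos hx, if_neg hy] at hxy
      have hgx : g x ∈ (Iᶜ : Finset (Fin n)) := hg.1 x (hmemS1 x hx)
      obtain ⟨r, hr, hgr⟩ := hkey y (hnotS1 y hy) (by rw [← hxy]; exact hgx)
      have : x = r := hg.2 x (hmemS1 x hx) r (hRRJc hr) (by rw [hgr, ← hxy])
      rw [hS1def, Finset.mem_sdiff] at hx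
      rw [this] at hx
      exact hx.2 hr
    · exfalso
      rw [if_neg hx, if_pos hy] at hxy
      have hgy : g y ∈ (Iᶜ : Finset (Fin n)) := hg.1 y (hmemS1 y hy)
      obtain ⟨r, hr, hgr⟩ := hkey x (hnotS1 x hx) (by rw [hxy]; exact hgy)
      have : y = r := hg.2 y (hmemS1 y hy) r (hRRJc hr) (by rw [hgr, hxy])
      rw [hS1def, Finset.mem_sdiff] at hy
      rw [this] at hy
      exact hy.2 hr
    · rw [if_neg hx, if_neg hy] at hxy
      exact μ.injective hxy
  have hν := w_le (A := A) hper (mkPerm _ hinjν)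
  have hS1c : (S1ᶜ : Finset (Fin n)) = J ∪ RR := by
    ext x
    rw [Finset.mem_compl, hS1def, Finset.mem_sdiff, Finset.mem_compl, Finset.mem_union]
    by_cases hxJ : x ∈ J <;> by_cases hxR : x ∈ RR <;> simp [hxJ, hxR]
  have hdisjJRR : Disjoint J RR := by
    rw [Finset.disjoint_left]
    intro x hxJ hxR
    have := hRRJc hxR
    rw [Finset.mem_compl] at this
    exact this hxJ
  have hwνs : w A (mkPerm _ hinjν)
      = (∑ x ∈ S1, A x (g x)) + ((∑ x ∈ J, A x (μ x)) + ∑ x ∈ RR, A x (μ x)) := by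
    rw [w]
    have hsplit := Finset.sum_compl_add_sum S1 (fun x => A x ((mkPerm _ hinjν) x))
    have e1 : ∑ x ∈ S1, A x ((mkPerm _ hinjν) x) = ∑ x ∈ S1, A x (g x) := by
      apply Finset.sum_congr rfl
      intro x hx
      simp only [mkPerm_apply, if_pos hx]
    have e2 : ∑ x ∈ (S1ᶜ : Finset (Fin n)), A x ((mkPerm _ hinjν) x)
        = (∑ x ∈ J, A x (μ x)) + ∑ x ∈ RR, A x (μ x) := by
      have e3 : ∑ x ∈ (S1ᶜ : Finset (Fin n)), A x ((mkPerm _ hinjν) x)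
          = ∑ x ∈ (S1ᶜ : Finset (Fin n)), A x (μ x) := by
        apply Finset.sum_congr rfl
        intro x hx
        rw [Finset.mem_compl] at hx
        simp only [mkPerm_apply, if_neg hx]
      rw [e3, hS1c, Finset.sum_union hdisjJRR]
    rw [← hsplit, e1, e2]
    ring
  -- final assembly
  have hfin1 : ∑ x ∈ (Jᶜ : Finset (Fin n)), A x (g x)
      = (∑ x ∈ S1, A x (g x)) + ∑ x ∈ RR, A x (g x) := by
    rw [hS1def]
    rw [← Finset.sum_sdiff hRRJc]
  have hfin2 : ∑ j ∈ J, (-A j (μ j) + ∑ x ∈ R j, (A x (g x) - A x (μ x)))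
      = -(∑ x ∈ J, A x (μ x)) + ((∑ x ∈ RR, A x (g x)) - ∑ x ∈ RR, A x (μ x)) := by
    rw [Finset.sum_add_distrib, hbiu.symm, Finset.sum_sub_distrib, ← Finset.sum_neg_distrib]
  have hlast := sum_VOn_le_tropCompound (tropAdjM A) h hτ
  rw [hsum1] at hlast
  rw [hwνs] at hν
  rw [hfin2] at hsum2
  linarith [hlast, hsum2, hν, hfin1]

set_option maxHeartbeats 1600000 in
lemma claim {A : Matrix (Fin n) (Fin n) ℝ} (hper : tropPer A = 0)
    (μ : Equiv.Perm (Fin n)) (hμ : w A μ = 0) :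
    ∀ k : ℕ, ∀ I J : Finset (Fin n), I.card = k → I.card = J.card →
    ∀ τ : Fin n → Fin n, VOn I J τ →
    (∀ g : Fin n → Fin n, VOn I J g →
      (∑ i ∈ I, tropAdjM A i (g i)) ≤ ∑ i ∈ I, tropAdjM A i (τ i)) →
    (∃ τ' : Fin n → Fin n, VOn I J τ' ∧ (∃ x ∈ I, τ' x ≠ τ x) ∧
        (∑ i ∈ I, tropAdjM A i (τ' i)) = ∑ i ∈ I, tropAdjM A i (τ i)) ∨
    (∃ ρ : Equiv.Perm (Fin n), (∀ i ∈ I, ρ (τ i) = i) ∧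
        (∑ i ∈ I, tropAdjM A i (τ i)) + (∑ i ∈ I, A (τ i) i) ≤ w A ρ) := by
  classical
  intro k
  induction k using Nat.strong_induction_on with
  | _ k IH =>
  intro I J hk hIJ τ hτ hmax
  by_cases hk0 : I = ∅
  · right
    refine ⟨μ, ?_, ?_⟩
    · intro i hi; rw [hk0] at hi; exact absurd hi (Finset.notMem_empty i)
    · rw [hk0]
      simp [hμ]
  · obtain ⟨i0, hi0⟩ := Finset.nonempty_iff_ne_empty.mpr hk0
    set I' : Finset (Fin n) := I.erase i0 with hI'def
    have hτi0J : τ i0 ∈ J := hτ.1 i0 hi0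
    set J' : Finset (Fin n) := J.erase (τ i0) with hJ'def
    have hI'J' : I'.card = J'.card := by
      rw [hI'def, hJ'def, Finset.card_erase_of_mem hi0, Finset.card_erase_of_mem hτi0J, hIJ]
    have hI'lt : I'.card < k := by
      rw [hI'def, Finset.card_erase_of_mem hi0, ← hk]
      have : 0 < I.card := Finset.card_pos.mpr ⟨i0, hi0⟩
      omega
    -- sub-maximizer
    obtain ⟨τs, hτs, hτsval⟩ := tropCompound_attain (tropAdjM A) hI'J'
    have hmax' : ∀ g : Fin n → Fin n, VOn I' J' g →
        (∑ i ∈ I', tropAdjM A i (g i)) ≤ ∑ i ∈ I', tropAdjM A i (τs i) := by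
      intro g hg
      have h1 := sum_VOn_le_tropCompound (tropAdjM A) hI'J' hg
      rw [hτsval] at h1
      exact h1
    -- extension gadget
    have hextV : ∀ gg : Fin n → Fin n, VOn I' J' gg →
        VOn I J (fun x => if x = i0 then τ i0 else gg x) := by
      intro gg hgg
      constructor
      · intro x hx
        dsimp only
        by_cases hxi : x = i0
        · rw [if_pos hxi]; exact hτi0J
        · rw [if_neg hxi]
          have hxI' : x ∈ I' := Finset.mem_erase.mpr ⟨hxi, hx⟩
          exact Finset.mem_of_mem_erase (hgg.1 x hxI')
      · intro x hx y hy hxy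
        dsimp only at hxy
        by_cases hxi : x = i0 <;> by_cases hyi : y = i0
        · rw [hxi, hyi]
        · exfalso
          rw [if_pos hxi, if_neg hyi] at hxy
          have hyI' : y ∈ I' := Finset.mem_erase.mpr ⟨hyi, hy⟩
          have := hgg.1 y hyI'
          rw [hJ'def, Finset.mem_erase] at this
          exact this.1 hxy.symm
        · exfalso
          rw [if_neg hxi, if_pos hyi] at hxy
          have hxI' : x ∈ I' := Finset.mem_erase.mpr ⟨hxi, hx⟩
          have := hgg.1 x hxI'
          rw [hJ'def, Finset.mem_erase] at this
          exact this.1 hxy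
        · rw [if_neg hxi, if_neg hyi] at hxy
          exact hgg.2 x (Finset.mem_erase.mpr ⟨hxi, hx⟩) y (Finset.mem_erase.mpr ⟨hyi, hy⟩) hxy
    have hsplitI : ∀ F : Fin n → ℝ, ∑ i ∈ I, F i = F i0 + ∑ i ∈ I', F i := by
      intro F
      rw [hI'def, ← Finset.insert_erase hi0, Finset.sum_insert (Finset.notMem_erase i0 I),
        Finset.erase_insert (Finset.notMem_erase i0 I)]
    have hextval : ∀ gg : Fin n → Fin n,
        (∑ i ∈ I, tropAdjM A i ((fun x => if x = i0 then τ i0 else gg x) i))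
        = tropAdjM A i0 (τ i0) + ∑ i ∈ I', tropAdjM A i (gg i) := by
      intro gg
      rw [hsplitI]
      dsimp only
      congr 1
      · rw [if_pos rfl]
      · apply Finset.sum_congr rfl
        intro x hx
        rw [if_neg (Finset.mem_erase.mp hx).1]
    have hτI' : VOn I' J' τ := by
      constructor
      · intro x hx
        rw [hJ'def, Finset.mem_erase]
        obtain ⟨hxi, hxI⟩ := Finset.mem_erase.mp hx
        exact ⟨fun hc => hxi (hτ.2 x hxI i0 hi0 hc), hτ.1 x hxI⟩
      · intro x hx y hy hxy
        exact hτ.2 x (Finset.mem_of_mem_erase hx) y (Finset.mem_of_mem_erase hy) hxy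
    have hτdecomp : ∑ i ∈ I, tropAdjM A i (τ i)
        = tropAdjM A i0 (τ i0) + ∑ i ∈ I', tropAdjM A i (τ i) := hsplitI _
    have hsuble : ∑ i ∈ I', tropAdjM A i (τ i) ≤ ∑ i ∈ I', tropAdjM A i (τs i) :=
      hmax' τ hτI'
    have hextle := hmax _ (hextV τs hτs)
    rw [hextval τs] at hextle
    have hsubeq : ∑ i ∈ I', tropAdjM A i (τs i) = ∑ i ∈ I', tropAdjM A i (τ i) := by
      linarith [hextle, hsuble, hτdecomp.ge, hτdecomp.le]
    have hextattain : (∑ i ∈ I, tropAdjM A i ((fun x => if x = i0 then τ i0 else τs x) i))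
        = ∑ i ∈ I, tropAdjM A i (τ i) := by
      rw [hextval τs, hsubeq, hτdecomp]
    by_cases hcs : ∀ x ∈ I, (fun x => if x = i0 then τ i0 else τs x) x = τ x
    · -- τs agrees with τ on I'
      have hτsτ : ∀ x ∈ I', τs x = τ x := by
        intro x hx
        have hxi0 : x ≠ i0 := (Finset.mem_erase.mp hx).1
        have := hcs x (Finset.mem_of_mem_erase hx)
        dsimp only at this
        rw [if_neg hxi0] at this
        exact this
      -- apply induction hypothesis to the subproblem
      rcases IH I'.card hI'lt I' J' rfl hI'J' τs hτs hmax' with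
        ⟨τ'', hτ''V, ⟨x0, hx0I', hx0ne⟩, hτ''val⟩ | ⟨ρ', hρ'c, hρ'w⟩
      · -- sub-tie lifts to a tie
        left
        refine ⟨fun x => if x = i0 then τ i0 else τ'' x, hextV τ'' hτ''V,
          ⟨x0, Finset.mem_of_mem_erase hx0I', ?_⟩, ?_⟩
        · dsimp only
          rw [if_neg (Finset.mem_erase.mp hx0I').1, ← hτsτ x0 hx0I']
          exact hx0ne
        · rw [hextval τ'', hτ''val, hsubeq, ← hτdecomp]
      · -- merged permutation for the subproblem
        obtain ⟨ξ, hξc, hξv⟩ := tropAdj_attain A i0 (τ i0)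
        by_cases hob : ∃ i1 ∈ I', (ξ⁻¹ * ρ').SameCycle (τ i0) (τ i1)
        · -- EXCHANGE case: produce a tie
          obtain ⟨i1, hi1I', hsc1⟩ := hob
          set C : Finset (Fin n) :=
            I'.filter (fun i => (ξ⁻¹ * ρ').SameCycle (τ i0) (τ i)) with hCdef
          have hCex : ∀ i ∈ C, ∃ t, 0 < t ∧ ((ξ⁻¹ * ρ')^t) (τ i) = τ i0 := by
            intro i hi
            rw [hCdef, Finset.mem_filter] at hi
            obtain ⟨t, ht0, -, hteq⟩ := Equiv.Perm.SameCycle.exists_pow_eq (ξ⁻¹ * ρ') hi.2.symm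
            exact ⟨t, ht0, hteq⟩
          set dfun : Fin n → ℕ := fun i =>
            if hi : ∃ t, 0 < t ∧ ((ξ⁻¹ * ρ')^t) (τ i) = τ i0 then Nat.find hi else 0 with hdfundef
          have hCne : C.Nonempty :=
            ⟨i1, by rw [hCdef, Finset.mem_filter]; exact ⟨hi1I', hsc1⟩⟩
          obtain ⟨i1m, hi1mC, hminC⟩ := Finset.exists_min_image C dfun hCne
          have hi1mI' : i1m ∈ I' := by
            have := hi1mC
            rw [hCdef, Finset.mem_filter] at this
            exact this.1
          have hsc1m : (ξ⁻¹ * ρ').SameCycle (τ i0) (τ i1m) := by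
            have := hi1mC
            rw [hCdef, Finset.mem_filter] at this
            exact this.2
          have hex1 : ∃ t, 0 < t ∧ ((ξ⁻¹ * ρ')^t) (τ i1m) = τ i0 := hCex i1m hi1mC
          set m : ℕ := dfun i1m with hmdef
          have hmeq : m = Nat.find hex1 := by
            rw [hmdef, hdfundef]
            simp only [dif_pos hex1]
          have hm0 : 0 < m := by rw [hmeq]; exact (Nat.find_spec hex1).1
          have hmb : ((ξ⁻¹ * ρ')^m) (τ i1m) = τ i0 := by
            rw [hmeq]; exact (Nat.find_spec hex1).2
          have hminm : ∀ t, 0 < t → t < m → ((ξ⁻¹ * ρ')^t) (τ i1m) ≠ τ i0 := by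
            intro t ht0 htm hc
            rw [hmeq] at htm
            exact absurd (⟨ht0, hc⟩ : 0 < t ∧ ((ξ⁻¹ * ρ')^t) (τ i1m) = τ i0)
              (Nat.find_min hex1 htm)
          have hi1mne : i1m ≠ i0 := (Finset.mem_erase.mp hi1mI').1
          have hi1mI : i1m ∈ I := Finset.mem_of_mem_erase hi1mI'
          have habne : τ i1m ≠ τ i0 := fun hc => hi1mne (hτ.2 i1m hi1mI i0 hi0 hc)
          obtain ⟨σ1, σ2, hσ1a, hσ2b, hσ1off, hw12⟩ :=
            exchange A ρ' ξ (τ i1m) (τ i0) habne m hm0 hmb hminm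
          have hρ'a : ρ' (τ i1m) = i1m := by
            rw [← hτsτ i1m hi1mI']; exact hρ'c i1m hi1mI'
          have hσ1ai0 : σ1 (τ i1m) = i0 := by rw [hσ1a, hξc]
          have hσ2bi : σ2 (τ i0) = i1m := by rw [hσ2b, hρ'a]
          set It : Finset (Fin n) := I.erase i1m with hItdef
          have hi0It : i0 ∈ It := Finset.mem_erase.mpr ⟨fun h => hi1mne h.symm, hi0⟩
          have hItJ' : It.card = J'.card := by
            rw [hItdef, hJ'def, Finset.card_erase_of_mem hi1mI,
              Finset.card_erase_of_mem hτi0J, hIJ]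
          set θt : Fin n → Fin n := fun x => if x = i0 then τ i1m else τ x with hθtdef
          have hθtV : VOn It J' θt := by
            constructor
            · intro x hx
              rw [hθtdef]
              dsimp only
              obtain ⟨hxne, hxI⟩ := Finset.mem_erase.mp hx
              by_cases hxi : x = i0
              · rw [if_pos hxi, hJ'def, Finset.mem_erase]
                exact ⟨habne, hτ.1 i1m hi1mI⟩
              · rw [if_neg hxi, hJ'def, Finset.mem_erase]
                exact ⟨fun hc => hxi (hτ.2 x hxI i0 hi0 hc), hτ.1 x hxI⟩
            · intro x hx y hy hxy
              rw [hθtdef] at hxy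
              dsimp only at hxy
              obtain ⟨hxne, hxI⟩ := Finset.mem_erase.mp hx
              obtain ⟨hyne, hyI⟩ := Finset.mem_erase.mp hy
              by_cases hxi : x = i0 <;> by_cases hyi : y = i0
              · rw [hxi, hyi]
              · rw [if_pos hxi, if_neg hyi] at hxy
                exact absurd (hτ.2 i1m hi1mI y hyI hxy).symm hyne
              · rw [if_neg hxi, if_pos hyi] at hxy
                exact absurd (hτ.2 x hxI i1m hi1mI hxy) hxne
              · rw [if_neg hxi, if_neg hyi] at hxy
                exact hτ.2 x hxI y hyI hxy
          have hσ1c : ∀ i ∈ It, σ1 (θt i) = i := by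
            intro i hi
            obtain ⟨hine, hiI⟩ := Finset.mem_erase.mp hi
            by_cases hii : i = i0
            · rw [hii]
              show σ1 (θt i0) = i0
              rw [hθtdef]
              dsimp only
              rw [if_pos rfl]
              exact hσ1ai0
            · have hiI' : i ∈ I' := Finset.mem_erase.mpr ⟨hii, hiI⟩
              have hoffi : σ1 (τ i) = ρ' (τ i) := by
                apply hσ1off
                intro t htm hc
                by_cases ht0 : t = 0
                · rw [ht0, pow_zero] at hc
                  rw [Equiv.Perm.one_apply] at hc
                  exact hine (hτ.2 i hiI i1m hi1mI hc)
                · have hscio : (ξ⁻¹ * ρ').SameCycle (τ i0) (τ i) := by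
                    apply hsc1m.trans
                    exact ⟨(t : ℤ), by rw [zpow_natCast]; exact hc.symm⟩
                  have hpmt : 0 < m - t ∧ ((ξ⁻¹ * ρ')^(m - t)) (τ i) = τ i0 := by
                    refine ⟨by omega, ?_⟩
                    rw [hc, ← Equiv.Perm.mul_apply, ← pow_add,
                      Nat.sub_add_cancel (by omega : t ≤ m)]
                    exact hmb
                  have hexi : ∃ s, 0 < s ∧ ((ξ⁻¹ * ρ')^s) (τ i) = τ i0 := ⟨m - t, hpmt⟩
                  have hdle : dfun i ≤ m - t := by
                    rw [hdfundef]
                    simp only [dif_pos hexi]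
                    exact Nat.find_le hpmt
                  have hiC : i ∈ C := by
                    rw [hCdef, Finset.mem_filter]
                    exact ⟨hiI', hscio⟩
                  have hge := hminC i hiC
                  omega
              rw [hθtdef]
              dsimp only
              rw [if_neg hii, hoffi, ← hτsτ i hiI']
              exact hρ'c i hiI'
          obtain ⟨hσ1V, hσ1sum⟩ := restrict hItJ' hθtV σ1 hσ1c
          have hwalk := walk hper μ hμ hItJ' hσ1V
          obtain ⟨τt, hτtV, hτtval⟩ := tropCompound_attain (tropAdjM A) hItJ'
          rw [hτtval, hσ1sum] at hwalk
          have hadj2 : w A σ2 - A (τ i0) i1m ≤ tropAdjM A i1m (τ i0) :=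
            le_tropAdj (A := A) σ2 hσ2bi
          set EXT : Fin n → Fin n := fun x => if x = i1m then τ i0 else τt x with hEXTdef
          have hEXTV : VOn I J EXT := by
            constructor
            · intro x hx
              rw [hEXTdef]
              dsimp only
              by_cases hxi : x = i1m
              · rw [if_pos hxi]; exact hτi0J
              · rw [if_neg hxi]
                have := hτtV.1 x (Finset.mem_erase.mpr ⟨hxi, hx⟩)
                rw [hJ'def] at this
                exact Finset.mem_of_mem_erase this
            · intro x hx y hy hxy
              rw [hEXTdef] at hxy
              dsimp only at hxy
              by_cases hxi : x = i1m <;> by_cases hyi : y = i1m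
              · rw [hxi, hyi]
              · exfalso
                rw [if_pos hxi, if_neg hyi] at hxy
                have := hτtV.1 y (Finset.mem_erase.mpr ⟨hyi, hy⟩)
                rw [hJ'def, Finset.mem_erase] at this
                exact this.1 hxy.symm
              · exfalso
                rw [if_neg hxi, if_pos hyi] at hxy
                have := hτtV.1 x (Finset.mem_erase.mpr ⟨hxi, hx⟩)
                rw [hJ'def, Finset.mem_erase] at this
                exact this.1 hxy
              · rw [if_neg hxi, if_neg hyi] at hxy
                exact hτtV.2 x (Finset.mem_erase.mpr ⟨hxi, hx⟩)
                  y (Finset.mem_erase.mpr ⟨hyi, hy⟩) hxy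
          have hsplitI2 : ∀ F : Fin n → ℝ, ∑ i ∈ I, F i = F i1m + ∑ i ∈ It, F i := by
            intro F
            rw [hItdef, ← Finset.insert_erase hi1mI,
              Finset.sum_insert (Finset.notMem_erase i1m I),
              Finset.erase_insert (Finset.notMem_erase i1m I)]
          have hEXTval : ∑ i ∈ I, tropAdjM A i (EXT i)
              = tropAdjM A i1m (τ i0) + ∑ i ∈ It, tropAdjM A i (τt i) := by
            rw [hsplitI2 (fun i => tropAdjM A i (EXT i))]
            congr 1
            · rw [hEXTdef]
              dsimp only
              rw [if_pos rfl]
            · apply Finset.sum_congr rfl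
              intro x hx
              rw [hEXTdef]
              dsimp only
              rw [if_neg (Finset.mem_erase.mp hx).1]
          have hsplitIt : ∀ F : Fin n → ℝ,
              ∑ i ∈ It, F i = F i0 + ∑ i ∈ It.erase i0, F i := by
            intro F
            rw [← Finset.insert_erase hi0It,
              Finset.sum_insert (Finset.notMem_erase i0 It),
              Finset.erase_insert (Finset.notMem_erase i0 It)]
          have hθtsum : ∑ i ∈ It, A (θt i) i
              = A (τ i1m) i0 + ∑ i ∈ It.erase i0, A (τ i) i := by
            rw [hsplitIt (fun i => A (θt i) i)]
            congr 1
            · rw [hθtdef]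
              dsimp only
              rw [if_pos rfl]
            · apply Finset.sum_congr rfl
              intro x hx
              rw [hθtdef]
              dsimp only
              rw [if_neg (Finset.mem_erase.mp hx).1]
          have herasecomm : I'.erase i1m = It.erase i0 := by
            rw [hI'def, hItdef, Finset.erase_right_comm]
          have hsplitI'A : ∑ i ∈ I', A (τ i) i
              = A (τ i1m) i1m + ∑ i ∈ It.erase i0, A (τ i) i := by
            rw [← herasecomm, ← Finset.insert_erase hi1mI',
              Finset.sum_insert (Finset.notMem_erase i1m I'),
              Finset.erase_insert (Finset.notMem_erase i1m I')]
          have h1 : ∑ i ∈ I', A (τs i) i = ∑ i ∈ I', A (τ i) i :=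
            Finset.sum_congr rfl fun i hi => by rw [hτsτ i hi]
          rw [hρ'a, hξc] at hw12
          have hEXTge : ∑ i ∈ I, tropAdjM A i (τ i) ≤ ∑ i ∈ I, tropAdjM A i (EXT i) := by
            rw [hEXTval]
            linarith [hwalk, hadj2, hw12, hρ'w, h1, hsubeq, hτdecomp, hθtsum, hsplitI'A, hξv]
          have hEXTle := hmax EXT hEXTV
          left
          refine ⟨EXT, hEXTV, ⟨i1m, hi1mI, ?_⟩, le_antisymm hEXTle hEXTge⟩
          rw [hEXTdef]
          dsimp only
          rw [if_pos rfl]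
          exact fun hc => habne hc.symm
        · -- MERGE case
          right
          push_neg at hob
          obtain ⟨ρ, hρ1, hρ2, hρ3⟩ := merge hper ρ' ξ (τ i0)
          refine ⟨ρ, ?_, ?_⟩
          · intro i hi
            by_cases hii : i = i0
            · rw [hii, hρ1 (τ i0) (Equiv.Perm.SameCycle.refl _ _), hξc]
            · have hiI' : i ∈ I' := Finset.mem_erase.mpr ⟨hii, hi⟩
              rw [hρ2 (τ i) (hob i hiI'), ← hτsτ i hiI']
              exact hρ'c i hiI'
          · have h1 : ∑ i ∈ I', A (τs i) i = ∑ i ∈ I', A (τ i) i :=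
              Finset.sum_congr rfl fun i hi => by rw [hτsτ i hi]
            have h3 := hsplitI (fun i => A (τ i) i)
            linarith [hρ3, hρ'w, h1, hsubeq, hτdecomp, h3, hξv]
    · -- the extension itself is a tie
      left
      push_neg at hcs
      obtain ⟨x0, hx0I, hx0ne⟩ := hcs
      exact ⟨_, hextV τs hτs, ⟨x0, hx0I, hx0ne⟩, hextattain⟩

end TJ

/-- Tropical Jacobi identity: if `per(A) = 0` then either
`adj(A)^{∧k}_{I,J} = A^{∧(n−k)}_{Jᶜ,Iᶜ}`, or the optimal value
`adj(A)^{∧k}_{I,J}` is attained by two distinct bijections `I → J`. -/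
theorem tropical_jacobi_identity {n : ℕ} (A : Matrix (Fin n) (Fin n) ℝ)
    (hper : tropPer A = 0) (I J : Finset (Fin n)) (h : I.card = J.card) :
    tropCompound (tropAdjM A) I J h =
        tropCompound A Jᶜ Iᶜ (by simp [Finset.card_compl, h]) ∨
    ∃ π σ : {x // x ∈ I} ≃ {x // x ∈ J}, π ≠ σ ∧
      (∑ i, tropAdjM A i.1 (π i).1) = tropCompound (tropAdjM A) I J h ∧
      (∑ i, tropAdjM A i.1 (σ i).1) = tropCompound (tropAdjM A) I J h := by
  classical
  obtain ⟨μ, hμ⟩ := TJ.exists_w_eq hper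
  obtain ⟨τ, hτ, hτval⟩ := TJ.tropCompound_attain (tropAdjM A) h
  have hmax : ∀ g : Fin n → Fin n, TJ.VOn I J g →
      (∑ i ∈ I, tropAdjM A i (g i)) ≤ ∑ i ∈ I, tropAdjM A i (τ i) := by
    intro g hg
    have h1 := TJ.sum_VOn_le_tropCompound (tropAdjM A) h hg
    rw [hτval] at h1
    exact h1
  rcases TJ.claim hper μ hμ I.card I J rfl h τ hτ hmax with
    ⟨τ', hτ'V, ⟨x0, hx0, hne⟩, hval⟩ | ⟨ρ, hρc, hρw⟩
  · right
    refine ⟨TJ.toEquiv h hτ'V, TJ.toEquiv h hτ, ?_, ?_, ?_⟩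
    · intro hc
      have h3 : (TJ.toEquiv h hτ'V ⟨x0, hx0⟩).1 = (TJ.toEquiv h hτ ⟨x0, hx0⟩).1 := by
        rw [hc]
      exact hne h3
    · rw [hτval]
      calc (∑ i : {x // x ∈ I}, tropAdjM A i.1 ((TJ.toEquiv h hτ'V) i).1)
          = ∑ i ∈ I, tropAdjM A i (τ' i) :=
            Finset.sum_coe_sort I (fun i => tropAdjM A i (τ' i))
        _ = ∑ i ∈ I, tropAdjM A i (τ i) := hval
    · rw [hτval]
      exact Finset.sum_coe_sort I (fun i => tropAdjM A i (τ i))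
  · left
    obtain ⟨hρV, hρsum⟩ := TJ.restrict (A := A) h hτ ρ hρc
    have hcc : (Jᶜ : Finset (Fin n)).card = (Iᶜ : Finset (Fin n)).card :=
      TJ.card_compl_eq h.symm
    apply le_antisymm
    · have h1 := TJ.sum_VOn_le_tropCompound A hcc hρV
      rw [hρsum] at h1
      rw [hτval]
      have h2 : (∑ i ∈ I, tropAdjM A i (τ i)) ≤ TJ.w A ρ - ∑ i ∈ I, A (τ i) i := by
        linarith [hρw]
      exact le_trans h2 h1
    · obtain ⟨g, hgV, hgval⟩ := TJ.tropCompound_attain A hcc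
      have h2 := TJ.walk hper μ hμ h hgV
      rw [hτval]
      rw [hτval] at h2
      exact le_of_eq_of_le hgval h2
end

section
/- Let A ∈ ℝ^{n×n} be normalized (zero diagonal, identity optimal), and let τ : Iᶜ → Jᶜ be a bijection attaining A^{∧(n−k)}_{Iᶜ,Jᶜ}, for I, J ⊆ [n] with |I|=|J|=k. Then adj(A)^{∧k}_{J,I} ≥ A^{∧(n−k)}_{Iᶜ,Jᶜ}: the value of the optimal bijection on the complements is always a lower bound for the optimal compound-adjoint value. -/
namespace TropAux

open Classical in
noncomputable def tf {n : ℕ} (I : Finset (Fin n)) (π : Equiv.Perm (Fin n)) (x : Fin n) : ℕ :=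
  if hx : ∃ t, (π ^ t) x ∈ I then Nat.find hx else 0

noncomputable def rho {n : ℕ} (I : Finset (Fin n)) (π : Equiv.Perm (Fin n)) (x : Fin n) : Fin n :=
  (π ^ tf I π x) x

noncomputable def Seg {n : ℕ} (I : Finset (Fin n)) (π : Equiv.Perm (Fin n)) (j : Fin n) :
    Finset (Fin n) :=
  (Finset.range (tf I π j)).image fun s => (π ^ s) j

open Classical in
noncomputable def Cset {n : ℕ} (I : Finset (Fin n)) (π : Equiv.Perm (Fin n)) : Finset (Fin n) :=
  Iᶜ.filter fun x => ¬ ∃ t, (π ^ t) x ∈ I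

lemma tf_spec {n : ℕ} {I : Finset (Fin n)} {π : Equiv.Perm (Fin n)} {x : Fin n}
    (h : ∃ t, (π ^ t) x ∈ I) : (π ^ tf I π x) x ∈ I := by
  classical
  rw [tf, dif_pos h]
  exact Nat.find_spec h

lemma tf_min {n : ℕ} {I : Finset (Fin n)} {π : Equiv.Perm (Fin n)} {x : Fin n}
    {s : ℕ} (hs : s < tf I π x) : (π ^ s) x ∉ I := by
  classical
  by_cases h : ∃ t, (π ^ t) x ∈ I
  · rw [tf, dif_pos h] at hs
    exact Nat.find_min h hs
  · rw [tf, dif_neg h] at hs; omega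

lemma tf_le {n : ℕ} {I : Finset (Fin n)} {π : Equiv.Perm (Fin n)} {x : Fin n}
    {s : ℕ} (hs : (π ^ s) x ∈ I) : tf I π x ≤ s := by
  by_contra hc
  exact tf_min (lt_of_not_ge hc) hs

section Main

variable {n : ℕ} {I J : Finset (Fin n)} {π : Equiv.Perm (Fin n)}
  (hπ : ∀ x, π x ∈ J ↔ x ∈ I)

include hπ

lemma mem_P_of_J {j : Fin n} (hj : j ∈ J) : ∃ t, (π ^ t) j ∈ I := by
  refine ⟨orderOf π - 1, (hπ _).1 ?_⟩
  have h1 : 1 ≤ orderOf π := orderOf_pos π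
  have : π ((π ^ (orderOf π - 1)) j) = (π ^ orderOf π) j := by
    rw [← Equiv.Perm.mul_apply, ← pow_succ']
    congr 2
    omega
  rw [this, pow_orderOf_eq_one]
  simpa using hj

lemma seg_key {j₁ j₂ : Fin n} (hj₁ : j₁ ∈ J) (hj₂ : j₂ ∈ J) {s₁ s₂ : ℕ}
    (hle : s₁ ≤ s₂) (hs₂ : s₂ ≤ tf I π j₂) (heq : (π ^ s₁) j₁ = (π ^ s₂) j₂) :
    j₁ = j₂ ∧ s₁ = s₂ := by
  have hd : (π ^ s₁) j₁ = (π ^ s₁) ((π ^ (s₂ - s₁)) j₂) := by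
    rw [heq, ← Equiv.Perm.mul_apply, ← pow_add]
    congr 2
    omega
  have hj : j₁ = (π ^ (s₂ - s₁)) j₂ := (Equiv.injective _) hd
  rcases Nat.eq_zero_or_pos (s₂ - s₁) with h0 | hpos
  · rw [h0, pow_zero] at hj
    exact ⟨by simpa using hj, by omega⟩
  · exfalso
    obtain ⟨e, he⟩ : ∃ e, s₂ - s₁ = e + 1 := ⟨s₂ - s₁ - 1, by omega⟩
    have : π ((π ^ e) j₂) = j₁ := by
      rw [← Equiv.Perm.mul_apply, ← pow_succ', ← he, hj]
    have hI : (π ^ e) j₂ ∈ I := (hπ _).1 (by rw [this]; exact hj₁)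
    exact tf_min (by omega) hI

lemma seg_cover {x : Fin n} (hxI : x ∉ I) (hx : ∃ t, (π ^ t) x ∈ I) :
    ∃ j ∈ J, x ∈ Seg I π j := by
  classical
  set N := orderOf π with hNdef
  have h1 : 1 ≤ N := orderOf_pos π
  have hNpow : π ^ N = 1 := pow_orderOf_eq_one π
  -- minimal forward hitting time is < N and ≥ 1
  have hts : (π ^ tf I π x) x ∈ I := tf_spec hx
  have ht0 : tf I π x ≠ 0 := by
    intro h0
    rw [h0, pow_zero] at hts
    exact hxI hts
  have htN : tf I π x < N := by
    have hmod : (π ^ (tf I π x % N)) x ∈ I := by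
      rw [pow_mod_orderOf]; exact hts
    have := tf_le hmod
    have := Nat.mod_lt (tf I π x) (by omega : 0 < N)
    omega
  set t := tf I π x with htdef
  -- backward hitting
  have hQ : ∃ v, ((π⁻¹) ^ (v + 1)) x ∈ I := by
    refine ⟨N - 1 - t, ?_⟩
    have h1' : N - 1 - t + 1 = N - t := by omega
    have h2 : (π ^ (N - t))⁻¹ = π ^ t := by
      apply inv_eq_of_mul_eq_one_right
      rw [← pow_add]
      have : N - t + t = N := by omega
      rw [this, hNpow]
    rw [h1', inv_pow, h2]
    exact hts
  set v₀ := Nat.find hQ with hv₀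
  have hv₀spec : ((π⁻¹) ^ (v₀ + 1)) x ∈ I := Nat.find_spec hQ
  set j := π (((π⁻¹) ^ (v₀ + 1)) x) with hjdef
  have hjJ : j ∈ J := (hπ _).2 hv₀spec
  have hjeq : ((π⁻¹) ^ v₀) x = j := by
    rw [hjdef, pow_succ', Equiv.Perm.mul_apply, Equiv.Perm.coe_inv, Equiv.apply_symm_apply]
  have hxeq : (π ^ v₀) j = x := by
    rw [← hjeq, inv_pow, Equiv.Perm.coe_inv, Equiv.apply_symm_apply]
  -- v₀ < tf I π j
  have hnot : ∀ s, s ≤ v₀ → (π ^ s) j ∉ I := by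
    intro s hs hsI
    have hseq : (π ^ s) j = ((π⁻¹) ^ (v₀ - s)) x := by
      rw [inv_pow]
      have : (π ^ (v₀ - s)) ((π ^ s) j) = x := by
        rw [← Equiv.Perm.mul_apply, ← pow_add]
        have : v₀ - s + s = v₀ := by omega
        rw [this, hxeq]
      rw [← this, Equiv.Perm.coe_inv, Equiv.symm_apply_apply]
    rcases Nat.eq_or_lt_of_le hs with he | hlt
    · rw [he, hxeq] at hsI
      exact hxI hsI
    · have hv : v₀ - s = (v₀ - s - 1) + 1 := by omega
      rw [hseq, hv] at hsI
      exact Nat.find_min hQ (by omega : v₀ - s - 1 < v₀) hsI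
  have hvlt : v₀ < tf I π j := by
    by_contra hc
    exact hnot _ (by omega) (tf_spec (mem_P_of_J hπ hjJ))
  exact ⟨j, hjJ, Finset.mem_image.2 ⟨v₀, Finset.mem_range.2 hvlt, hxeq⟩⟩

end Main

end TropAux

namespace TropAux

lemma le_tropCompound {n : ℕ} (A : Matrix (Fin n) (Fin n) ℝ) {I J : Finset (Fin n)}
    (h : I.card = J.card) (σ : {x // x ∈ I} ≃ {x // x ∈ J}) :
    (∑ i, A i.1 (σ i).1) ≤ tropCompound A I J h := by
  unfold tropCompound
  exact Finset.le_sup' (f := fun σ : {x // x ∈ I} ≃ {x // x ∈ J} => ∑ i, A i.1 (σ i).1)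
    (Finset.mem_univ σ)

lemma tropCompound_le {n : ℕ} (A : Matrix (Fin n) (Fin n) ℝ) {I J : Finset (Fin n)}
    (h : I.card = J.card) {b : ℝ}
    (hb : ∀ σ : {x // x ∈ I} ≃ {x // x ∈ J}, (∑ i, A i.1 (σ i).1) ≤ b) :
    tropCompound A I J h ≤ b := by
  unfold tropCompound
  exact Finset.sup'_le _ _ fun σ _ => hb σ

theorem aux_main {n : ℕ} (A : Matrix (Fin n) (Fin n) ℝ)
    (hdiag : ∀ i, A i i = 0)
    (I J : Finset (Fin n)) (h : J.card = I.card)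
    (π : Equiv.Perm (Fin n)) (hπ : ∀ x, π x ∈ J ↔ x ∈ I)
    (hJne : J.Nonempty) :
    ∑ x ∈ Iᶜ, A x (π x) ≤ tropCompound (tropAdjM A) J I h := by
  classical
  obtain ⟨j₀, hj₀⟩ := hJne
  -- basic facts
  have hSnotI : ∀ j x, x ∈ Seg I π j → x ∉ I := by
    intro j x hx
    obtain ⟨s, hs, rfl⟩ := Finset.mem_image.1 hx
    exact tf_min (Finset.mem_range.1 hs)
  have hSP : ∀ j x, x ∈ Seg I π j → ∃ t, (π ^ t) x ∈ I := by
    intro j x hx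
    obtain ⟨s, hs, rfl⟩ := Finset.mem_image.1 hx
    refine ⟨tf I π j - s, ?_⟩
    rw [← Equiv.Perm.mul_apply, ← pow_add]
    have : tf I π j - s + s = tf I π j := by
      have := Finset.mem_range.1 hs; omega
    rw [this]
    exact tf_spec (by
      rcases Finset.mem_range.1 hs with h'
      by_contra hc
      rw [tf, dif_neg hc] at h'
      omega)
  have hCmem : ∀ x, x ∈ Cset I π ↔ (x ∉ I ∧ ¬ ∃ t, (π ^ t) x ∈ I) := by
    intro x
    rw [Cset]
    simp [Finset.mem_filter, Finset.mem_compl]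
  have hCπ : ∀ x, x ∈ Cset I π → π x ∈ Cset I π := by
    intro x hx
    rw [hCmem] at hx ⊢
    constructor
    · intro hI
      exact hx.2 ⟨1, by simpa using hI⟩
    · rintro ⟨t, ht⟩
      refine hx.2 ⟨t + 1, ?_⟩
      rw [pow_succ, Equiv.Perm.mul_apply]
      exact ht
  have hCJ : ∀ x, x ∈ Cset I π → x ∉ J := by
    intro x hx hxJ
    exact ((hCmem x).1 hx).2 (mem_P_of_J hπ hxJ)
  have hCS : ∀ j x, x ∈ Cset I π → x ∉ Seg I π j := by
    intro j x hx hxS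
    exact ((hCmem x).1 hx).2 (hSP j x hxS)
  have hρI : ∀ j, j ∈ J → rho I π j ∈ I := fun j hj => tf_spec (mem_P_of_J hπ hj)
  have hρS : ∀ j, rho I π j ∉ Seg I π j := fun j hs => hSnotI j _ hs (by
    exact tf_spec (by
      by_contra hc
      -- if no hitting, tf = 0 and Seg = ∅
      have : tf I π j = 0 := by rw [tf, dif_neg hc]
      have : Seg I π j = ∅ := by rw [Seg, this]; simp
      rw [this] at hs
      exact absurd hs (Finset.notMem_empty _)))
  -- the bijection rho : J → I
  have hρinj : ∀ j₁ ∈ J, ∀ j₂ ∈ J, rho I π j₁ = rho I π j₂ → j₁ = j₂ := by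
    intro j₁ hj₁ j₂ hj₂ he
    rcases le_total (tf I π j₁) (tf I π j₂) with hle | hle
    · exact (seg_key hπ hj₁ hj₂ hle le_rfl he).1
    · exact ((seg_key hπ hj₂ hj₁ hle le_rfl he.symm).1).symm
  have hcard : Fintype.card {x // x ∈ J} = Fintype.card {x // x ∈ I} := by
    simp [Fintype.card_coe, h]
  have hρbij : Function.Bijective
      (fun j : {x // x ∈ J} => (⟨rho I π j.1, hρI j.1 j.2⟩ : {x // x ∈ I})) := by
    rw [Fintype.bijective_iff_injective_and_card]
    exact ⟨fun a b hab => Subtype.ext (hρinj a.1 a.2 b.1 b.2 (congrArg Subtype.val hab)), hcard⟩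
  set ρe : {x // x ∈ J} ≃ {x // x ∈ I} := Equiv.ofBijective _ hρbij with hρe
  -- weight of each local bijection
  set W : Fin n → ℝ := fun j =>
    (∑ x ∈ Seg I π j, A x (π x)) +
      (if j = j₀ then ∑ x ∈ Cset I π, A x (π x) else 0) with hW
  -- the per-j bound
  have hSegπ : ∀ j x, x ∈ Seg I π j → (π x ∈ Seg I π j ∨ π x = rho I π j) := by
    intro j x hx
    obtain ⟨s, hs, rfl⟩ := Finset.mem_image.1 hx
    have hs' := Finset.mem_range.1 hs
    have hps : π ((π ^ s) j) = (π ^ (s + 1)) j := by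
      rw [pow_succ', Equiv.Perm.mul_apply]
    rcases Nat.lt_or_ge (s + 1) (tf I π j) with hlt | hge
    · left
      rw [hps]
      exact Finset.mem_image.2 ⟨s + 1, Finset.mem_range.2 hlt, rfl⟩
    · right
      have hts : tf I π j = s + 1 := by omega
      rw [hps, rho, hts]
  have hterm : ∀ j ∈ J, W j ≤ tropAdjM A j (rho I π j) := by
    intro j hj
    have hρjI : rho I π j ∈ I := hρI j hj
    set F : Fin n → Fin n := fun x =>
      if x ∈ Seg I π j ∨ (j = j₀ ∧ x ∈ Cset I π) then π x else x with hF
    have hFS : ∀ x, x ∈ Seg I π j → F x = π x := by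
      intro x hx; simp [hF, hx]
    have hFC : j = j₀ → ∀ x, x ∈ Cset I π → F x = π x := by
      intro hjj x hx; simp [hF, hx, hjj]
    have hFid : ∀ x, x ∉ Seg I π j → ¬ (j = j₀ ∧ x ∈ Cset I π) → F x = x := by
      intro x hx1 hx2
      simp only [hF]
      rw [if_neg]
      rintro (hc | hc)
      · exact hx1 hc
      · exact hx2 hc
    have hjself : j ∈ Seg I π j ∨ j = rho I π j := by
      rcases Nat.eq_zero_or_pos (tf I π j) with h0 | hpos
      · right; rw [rho, h0, pow_zero]; rfl
      · left; exact Finset.mem_image.2 ⟨0, Finset.mem_range.2 hpos, by simp⟩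
    have hFne : ∀ x, x ≠ rho I π j → F x ≠ j := by
      intro x hx hFx
      by_cases hxS : x ∈ Seg I π j
      · rw [hFS x hxS] at hFx
        exact hSnotI j x hxS ((hπ x).1 (hFx ▸ hj))
      · by_cases hxC : j = j₀ ∧ x ∈ Cset I π
        · have hFx' : F x = π x := by simp [hF, hxC]
          rw [hFx'] at hFx
          exact hCJ _ (hCπ x hxC.2) (hFx ▸ hj)
        · rw [hFid x hxS hxC] at hFx
          subst hFx
          rcases hjself with hs | hs
          · exact hxS hs
          · exact hx hs
    have hFinj : ∀ x y, x ≠ rho I π j → y ≠ rho I π j → F x = F y → x = y := by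
      have hmix : ∀ x y, y ≠ rho I π j →
          (x ∈ Seg I π j ∨ (j = j₀ ∧ x ∈ Cset I π)) →
          ¬ (y ∈ Seg I π j ∨ (j = j₀ ∧ y ∈ Cset I π)) → F x = F y → False := by
        intro x y hyρ cx cy he
        have hFx : F x = π x := by simp [hF, cx]
        have hFy : F y = y := by
          simp only [hF]; rw [if_neg cy]
        rw [hFx, hFy] at he
        rcases cx with hxS | hxC
        · rcases hSegπ j x hxS with hin | hρ
          · exact cy (Or.inl (he ▸ hin))
          · exact hyρ (he ▸ hρ)
        · exact cy (Or.inr ⟨hxC.1, he ▸ hCπ x hxC.2⟩)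
      intro x y hxρ hyρ he
      by_cases cx : x ∈ Seg I π j ∨ (j = j₀ ∧ x ∈ Cset I π) <;>
        by_cases cy : y ∈ Seg I π j ∨ (j = j₀ ∧ y ∈ Cset I π)
      · have hFx : F x = π x := by simp [hF, cx]
        have hFy : F y = π y := by simp [hF, cy]
        rw [hFx, hFy] at he
        exact π.injective he
      · exact absurd he (fun he => hmix x y hyρ cx cy he)
      · exact absurd he.symm (fun he => hmix y x hxρ cy cx he)
      · have hFx : F x = x := by simp only [hF]; rw [if_neg cx]
        have hFy : F y = y := by simp only [hF]; rw [if_neg cy]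
        rw [hFx, hFy] at he
        exact he
    have hmem : ∀ x : {x // x ∈ ({rho I π j}ᶜ : Finset (Fin n))},
        F x.1 ∈ ({j}ᶜ : Finset (Fin n)) := by
      intro x
      rw [Finset.mem_compl, Finset.mem_singleton]
      refine hFne x.1 ?_
      have hx2 := x.2
      rw [Finset.mem_compl, Finset.mem_singleton] at hx2
      exact hx2
    have hbij : Function.Bijective (fun x : {x // x ∈ ({rho I π j}ᶜ : Finset (Fin n))} =>
        (⟨F x.1, hmem x⟩ : {x // x ∈ ({j}ᶜ : Finset (Fin n))})) := by
      rw [Fintype.bijective_iff_injective_and_card]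
      constructor
      · intro a b hab
        apply Subtype.ext
        have ha := a.2; have hb := b.2
        rw [Finset.mem_compl, Finset.mem_singleton] at ha hb
        exact hFinj a.1 b.1 ha hb (congrArg Subtype.val hab)
      · simp [Fintype.card_coe, Finset.card_compl]
    set e : {x // x ∈ ({rho I π j}ᶜ : Finset (Fin n))} ≃ {x // x ∈ ({j}ᶜ : Finset (Fin n))} :=
      Equiv.ofBijective _ hbij with he
    have hdisjSC : Disjoint (Seg I π j) (Cset I π) :=
      Finset.disjoint_right.2 fun x hx => hCS j x hx
    have hsub : Seg I π j ∪ (if j = j₀ then Cset I π else ∅) ⊆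
        ({rho I π j}ᶜ : Finset (Fin n)) := by
      intro x hx
      rw [Finset.mem_compl, Finset.mem_singleton]
      rcases Finset.mem_union.1 hx with hx | hx
      · intro hxe; exact hρS j (hxe ▸ hx)
      · by_cases hjj : j = j₀
        · rw [if_pos hjj] at hx
          intro hxe
          exact ((hCmem x).1 hx).1 (hxe ▸ hρjI)
        · rw [if_neg hjj] at hx
          exact absurd hx (Finset.notMem_empty x)
    have hw : ∑ x ∈ ({rho I π j}ᶜ : Finset (Fin n)), A x (F x) = W j := by
      rw [← Finset.union_sdiff_of_subset hsub, Finset.sum_union Finset.disjoint_sdiff]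
      have h2 : ∑ x ∈ (({rho I π j}ᶜ : Finset (Fin n)) \ (Seg I π j ∪ (if j = j₀ then Cset I π else ∅))), A x (F x) = 0 := by
        apply Finset.sum_eq_zero
        intro x hx
        rw [Finset.mem_sdiff, Finset.mem_union] at hx
        have hxS : x ∉ Seg I π j := fun hc => hx.2 (Or.inl hc)
        have hxC : ¬ (j = j₀ ∧ x ∈ Cset I π) := by
          rintro ⟨hjj, hxc⟩
          exact hx.2 (Or.inr (by rw [if_pos hjj]; exact hxc))
        rw [hFid x hxS hxC]
        exact hdiag x
      have h1 : ∑ x ∈ Seg I π j ∪ (if j = j₀ then Cset I π else ∅), A x (F x)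
          = (∑ x ∈ Seg I π j, A x (π x)) +
            (if j = j₀ then ∑ x ∈ Cset I π, A x (π x) else 0) := by
        by_cases hjj : j = j₀
        · rw [if_pos hjj, if_pos hjj, Finset.sum_union hdisjSC]
          congr 1
          · exact Finset.sum_congr rfl fun x hx => by rw [hFS x hx]
          · exact Finset.sum_congr rfl fun x hx => by rw [hFC hjj x hx]
        · rw [if_neg hjj, if_neg hjj, Finset.union_empty, add_zero]
          exact Finset.sum_congr rfl fun x hx => by rw [hFS x hx]
      rw [h1, h2, add_zero, hW]
    calc W j = ∑ x ∈ ({rho I π j}ᶜ : Finset (Fin n)), A x (F x) := hw.symm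
      _ = ∑ i : {x // x ∈ ({rho I π j}ᶜ : Finset (Fin n))}, A i.1 ((e i).1) :=
          (Finset.sum_coe_sort _ fun x => A x (F x)).symm
      _ ≤ tropCompound A ({rho I π j}ᶜ) ({j}ᶜ) (by simp [Finset.card_compl]) :=
          le_tropCompound A _ e
      _ = tropAdjM A j (rho I π j) := rfl
  -- total
  have hdisjSeg : (J : Set (Fin n)).PairwiseDisjoint (Seg I π) := by
    intro j₁ hj₁ j₂ hj₂ hne
    simp only [Function.onFun]
    rw [Finset.disjoint_left]
    intro x hx₁ hx₂
    obtain ⟨s₁, hs₁, rfl⟩ := Finset.mem_image.1 hx₁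
    obtain ⟨s₂, hs₂, he⟩ := Finset.mem_image.1 hx₂
    have hs₁' := Finset.mem_range.1 hs₁
    have hs₂' := Finset.mem_range.1 hs₂
    rcases le_total s₂ s₁ with hle | hle
    · exact hne ((seg_key hπ hj₂ hj₁ hle (by omega) he).1).symm
    · exact hne (seg_key hπ hj₁ hj₂ hle (by omega) he.symm).1
  have hbiU : J.biUnion (Seg I π) = Iᶜ.filter (fun x => ∃ t, (π ^ t) x ∈ I) := by
    ext x
    simp only [Finset.mem_biUnion, Finset.mem_filter, Finset.mem_compl]
    constructor
    · rintro ⟨j, hj, hx⟩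
      exact ⟨hSnotI j x hx, hSP j x hx⟩
    · rintro ⟨hxI, hx⟩
      exact seg_cover hπ hxI hx
  have htotal : ∑ j ∈ J, W j = ∑ x ∈ Iᶜ, A x (π x) := by
    simp only [hW]
    rw [Finset.sum_add_distrib,
      Finset.sum_ite_eq' J j₀ (fun _ => ∑ x ∈ Cset I π, A x (π x)), if_pos hj₀,
      ← Finset.sum_biUnion hdisjSeg, hbiU]
    have hcs : Cset I π = Iᶜ.filter (fun x => ¬ ∃ t, (π ^ t) x ∈ I) := rfl
    rw [hcs]
    exact Finset.sum_filter_add_sum_filter_not _ _ _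
  calc ∑ x ∈ Iᶜ, A x (π x) = ∑ j ∈ J, W j := htotal.symm
    _ = ∑ j : {x // x ∈ J}, W j.1 := (Finset.sum_coe_sort J W).symm
    _ ≤ ∑ j : {x // x ∈ J}, tropAdjM A j.1 (ρe j).1 := by
        apply Finset.sum_le_sum
        intro j _
        exact hterm j.1 j.2
    _ ≤ tropCompound (tropAdjM A) J I h := le_tropCompound (tropAdjM A) h ρe

end TropAux

/-- For a normalized matrix, the optimal bijection value on the complements is a
lower bound for the optimal compound-adjoint value:
`adj(A)^{∧k}_{J,I} ≥ A^{∧(n−k)}_{Iᶜ,Jᶜ}`. -/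
theorem tropAdj_compound_ge_of_normalized {n : ℕ} (A : Matrix (Fin n) (Fin n) ℝ)
    (hdiag : ∀ i, A i i = 0)
    (hopt : ∀ π : Equiv.Perm (Fin n), ∑ i, A i (π i) ≤ 0)
    (I J : Finset (Fin n)) (h : J.card = I.card) :
    tropCompound A Iᶜ Jᶜ (by simp [Finset.card_compl, h]) ≤
      tropCompound (tropAdjM A) J I h := by
  classical
  rcases J.eq_empty_or_nonempty with hJ | hJne
  · subst hJ
    have hI : I = ∅ := Finset.card_eq_zero.1 (by simpa using h.symm)
    subst hI
    have hR : (0 : ℝ) ≤ tropCompound (tropAdjM A) (∅ : Finset (Fin n)) ∅ h := by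
      have := TropAux.le_tropCompound (tropAdjM A) h
        (Equiv.refl {x // x ∈ (∅ : Finset (Fin n))})
      simpa using this
    refine le_trans (TropAux.tropCompound_le A _ ?_) hR
    intro σ
    have huniv : ∀ x : Fin n, x ∈ ((∅ : Finset (Fin n))ᶜ) := by simp
    set u : {x // x ∈ ((∅ : Finset (Fin n))ᶜ)} ≃ Fin n := Equiv.subtypeUnivEquiv huniv with hu
    set πe : Equiv.Perm (Fin n) := (u.symm.trans σ).trans u with hπe
    have : ∑ i : {x // x ∈ ((∅ : Finset (Fin n))ᶜ)}, A i.1 ((σ i).1)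
        = ∑ x : Fin n, A x (πe x) := by
      refine Fintype.sum_equiv u (fun i => A i.1 ((σ i).1)) (fun x => A x (πe x)) ?_
      intro i
      simp [hπe, hu]
    rw [this]
    exact hopt πe
  · -- nonempty case
    have hcard : Fintype.card {x // x ∈ I} = Fintype.card {x // x ∈ J} := by
      simp [Fintype.card_coe, h]
    apply TropAux.tropCompound_le
    intro σ
    set β : {x // x ∈ I} ≃ {x // x ∈ J} := Fintype.equivOfCardEq hcard with hβ
    set f : Fin n → Fin n := fun x =>
      if hx : x ∈ I then (β ⟨x, hx⟩ : Fin n)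
      else (σ ⟨x, Finset.mem_compl.2 hx⟩ : Fin n) with hf
    have hfI : ∀ x (hx : x ∈ I), f x = (β ⟨x, hx⟩ : Fin n) := by
      intro x hx; simp [hf, hx]
    have hfnI : ∀ x (hx : x ∉ I), f x = (σ ⟨x, Finset.mem_compl.2 hx⟩ : Fin n) := by
      intro x hx; simp [hf, hx]
    have hfJ : ∀ x, f x ∈ J ↔ x ∈ I := by
      intro x
      by_cases hx : x ∈ I
      · rw [hfI x hx]
        exact iff_of_true (by simpa using (β ⟨x, hx⟩).2) hx
      · rw [hfnI x hx]
        have := (σ ⟨x, Finset.mem_compl.2 hx⟩).2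
        rw [Finset.mem_compl] at this
        simp [hx, this]
    have hinj : Function.Injective f := by
      intro x y hxy
      by_cases hx : x ∈ I <;> by_cases hy : y ∈ I
      · rw [hfI x hx, hfI y hy] at hxy
        have := β.injective (Subtype.ext hxy)
        exact congrArg Subtype.val this
      · exfalso
        have h1 : f x ∈ J := (hfJ x).2 hx
        rw [hxy] at h1
        exact hy ((hfJ y).1 h1)
      · exfalso
        have h1 : f y ∈ J := (hfJ y).2 hy
        rw [← hxy] at h1
        exact hx ((hfJ x).1 h1)
      · rw [hfnI x hx, hfnI y hy] at hxy
        have := σ.injective (Subtype.ext hxy)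
        simpa using congrArg Subtype.val this
    set π : Equiv.Perm (Fin n) :=
      Equiv.ofBijective f ((Fintype.bijective_iff_injective_and_card f).2 ⟨hinj, rfl⟩) with hπ'
    have hπ : ∀ x, π x ∈ J ↔ x ∈ I := fun x => hfJ x
    have hval : ∑ i : {x // x ∈ Iᶜ}, A i.1 ((σ i).1) = ∑ x ∈ Iᶜ, A x (π x) := by
      rw [← Finset.sum_coe_sort Iᶜ (fun x => A x (π x))]
      apply Finset.sum_congr rfl
      intro i _
      have hiI : (i.1 : Fin n) ∉ I := Finset.mem_compl.1 i.2
      have : π i.1 = (σ ⟨i.1, Finset.mem_compl.2 hiI⟩ : Fin n) := hfnI i.1 hiI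
      rw [this]
    rw [hval]
    exact TropAux.aux_main A hdiag I J h π hπ hJne
end

section
/- Let A ∈ ℝ^{n×n} be normalized (zero diagonal, identity optimal, per(A)=0) and I, J ⊆ [n] with |I|=|J|=k. Suppose Π : Iᶜ → Jᶜ is any bijection. Then there exist permutations τ₁,…,τ_k ∈ S_n and a bijection π : I → J such that Σ_{t=1}^k Σ_{i ≠ i_t} A_{i,τ_t(i)} ≥ Σ_{i∈Iᶜ} A_{i,Π(i)}, where (i_t, π(i_t)) enumerates the graph of π and τ_t(i_t) = π(i_t). (Every optimal complement-bijection value is achievable as a base value of k assignments with supervisions I on J.) -/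
open Equiv Finset

/-- Any bijection between complements extends to a permutation each of whose cycles
contains at most one point of `I`. -/
lemma exists_good_extension {n : ℕ} :
    ∀ (m : ℕ) (I J : Finset (Fin n)), I.card = J.card → Iᶜ.card = m →
    ∀ (P : {x // x ∈ Iᶜ} ≃ {x // x ∈ Jᶜ}),
    ∃ σ : Equiv.Perm (Fin n),
      (∀ (i : Fin n) (h : i ∈ Iᶜ), σ i = (P ⟨i, h⟩ : Fin n)) ∧
      (∀ f ∈ I, ∀ f' ∈ I, σ.SameCycle f f' → f = f') := by
  intro m
  induction m with
  | zero =>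
    intro I J hcard hm P
    refine ⟨1, ?_, ?_⟩
    · intro i h
      rw [Finset.card_eq_zero.mp hm] at h
      exact absurd h (Finset.notMem_empty i)
    · intro f _ f' _ h
      exact Equiv.Perm.sameCycle_one.mp h
  | succ m ih =>
    intro I J hcard hm P
    classical
    have hne : Iᶜ.Nonempty := Finset.card_pos.mp (by omega)
    obtain ⟨i₀, hi₀⟩ := hne
    set j₀ : Fin n := (P ⟨i₀, hi₀⟩ : Fin n) with hj₀def
    have hj₀ : j₀ ∈ Jᶜ := (P ⟨i₀, hi₀⟩).2
    have hi₀I : i₀ ∉ I := Finset.mem_compl.mp hi₀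
    have hj₀J : j₀ ∉ J := Finset.mem_compl.mp hj₀
    have hmemI : ∀ x : Fin n, x ∈ (insert i₀ I)ᶜ ↔ x ≠ i₀ ∧ x ∈ Iᶜ := by
      intro x; rw [Finset.compl_insert, Finset.mem_erase]
    have hmemJ : ∀ x : Fin n, x ∈ (insert j₀ J)ᶜ ↔ x ≠ j₀ ∧ x ∈ Jᶜ := by
      intro x; rw [Finset.compl_insert, Finset.mem_erase]
    have key₁ : ∀ (x : Fin n) (hx : x ∈ Iᶜ), x ≠ i₀ → ((P ⟨x, hx⟩ : Fin n) ∈ (insert j₀ J)ᶜ) := by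
      intro x hx hne
      refine (hmemJ _).mpr ⟨fun h => hne ?_, (P ⟨x, hx⟩).2⟩
      have := P.injective (Subtype.ext (h.trans hj₀def))
      exact congrArg Subtype.val this
    have key₂ : ∀ (y : Fin n) (hy : y ∈ Jᶜ), y ≠ j₀ →
        ((P.symm ⟨y, hy⟩ : Fin n) ∈ (insert i₀ I)ᶜ) := by
      intro y hy hyne
      refine (hmemI _).mpr ⟨fun h => hyne ?_, (P.symm ⟨y, hy⟩).2⟩
      have h2 : P.symm ⟨y, hy⟩ = ⟨i₀, hi₀⟩ := Subtype.ext h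
      have h3 : (⟨y, hy⟩ : {x // x ∈ Jᶜ}) = P ⟨i₀, hi₀⟩ := by
        rw [← h2, P.apply_symm_apply]
      rw [hj₀def]
      exact congrArg Subtype.val h3
    let P' : {x // x ∈ (insert i₀ I)ᶜ} ≃ {x // x ∈ (insert j₀ J)ᶜ} :=
      { toFun := fun x => ⟨(P ⟨x.1, ((hmemI x.1).mp x.2).2⟩ : Fin n),
          key₁ x.1 _ ((hmemI x.1).mp x.2).1⟩
        invFun := fun y => ⟨(P.symm ⟨y.1, ((hmemJ y.1).mp y.2).2⟩ : Fin n),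
          key₂ y.1 _ ((hmemJ y.1).mp y.2).1⟩
        left_inv := fun x => Subtype.ext (by simp)
        right_inv := fun y => Subtype.ext (by simp) }
    have hcard' : (insert i₀ I).card = (insert j₀ J).card := by
      rw [Finset.card_insert_of_notMem hi₀I, Finset.card_insert_of_notMem hj₀J, hcard]
    have hm' : (insert i₀ I)ᶜ.card = m := by
      rw [Finset.compl_insert, Finset.card_erase_of_mem hi₀, hm]
      omega
    obtain ⟨σ', hE', hC'⟩ := ih (insert i₀ I) (insert j₀ J) hcard' hm' P'
    set b : Fin n := σ'⁻¹ j₀ with hbdef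
    have hσb : σ' b = j₀ := σ'.apply_symm_apply j₀
    have hbI' : b ∈ insert i₀ I := by
      by_contra hb
      have hbc : b ∈ (insert i₀ I)ᶜ := Finset.mem_compl.mpr hb
      have h3 : (↑(P' ⟨b, hbc⟩) : Fin n) ∈ (insert j₀ J)ᶜ := (P' ⟨b, hbc⟩).2
      rw [← hE' b hbc, hσb] at h3
      exact (Finset.mem_compl.mp h3) (Finset.mem_insert_self j₀ J)
    set τ : Equiv.Perm (Fin n) := σ' * Equiv.swap i₀ b with hτdef
    have hSC : ∀ w, σ'.SameCycle w (σ' w) := fun w => ⟨1, by simp⟩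
    have key : ∀ (m' : ℕ) (x : Fin n),
        σ'.SameCycle x ((τ ^ m') x) ∨
        (σ'.SameCycle x i₀ ∧ σ'.SameCycle b ((τ ^ m') x)) ∨
        (σ'.SameCycle x b ∧ σ'.SameCycle i₀ ((τ ^ m') x)) := by
      intro m'
      induction m' with
      | zero => intro x; left; simpa using Equiv.Perm.SameCycle.refl σ' x
      | succ m' ihm =>
        intro x
        have hpow : (τ ^ (m' + 1)) x = σ' (Equiv.swap i₀ b ((τ ^ m') x)) := by
          rw [pow_succ']; rfl
        rcases eq_or_ne ((τ ^ m') x) i₀ with hz | hz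
        · have ht : (τ ^ (m' + 1)) x = σ' b := by rw [hpow, hz, Equiv.swap_apply_left]
          rw [ht]
          rcases ihm x with h | ⟨h1, _⟩ | ⟨h1, _⟩
          · right; left; exact ⟨hz ▸ h, hSC b⟩
          · right; left; exact ⟨h1, hSC b⟩
          · left; exact h1.trans (hSC b)
        · rcases eq_or_ne ((τ ^ m') x) b with hz2 | hz2
          · have ht : (τ ^ (m' + 1)) x = σ' i₀ := by rw [hpow, hz2, Equiv.swap_apply_right]
            rw [ht]
            rcases ihm x with h | ⟨h1, _⟩ | ⟨h1, _⟩
            · right; right; exact ⟨hz2 ▸ h, hSC i₀⟩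
            · left; exact h1.trans (hSC i₀)
            · right; right; exact ⟨h1, hSC i₀⟩
          · have ht : (τ ^ (m' + 1)) x = σ' ((τ ^ m') x) := by
              rw [hpow, Equiv.swap_apply_of_ne_of_ne hz hz2]
            rw [ht]
            rcases ihm x with h | ⟨h1, h2⟩ | ⟨h1, h2⟩
            · left; exact h.trans (hSC _)
            · right; left; exact ⟨h1, h2.trans (hSC _)⟩
            · right; right; exact ⟨h1, h2.trans (hSC _)⟩
    refine ⟨τ, ?_, ?_⟩
    · intro i hi
      rcases eq_or_ne i i₀ with rfl | hne
      · have : τ i = j₀ := by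
          rw [hτdef, Equiv.Perm.mul_apply, Equiv.swap_apply_left, hσb]
        rw [this, hj₀def]
      · have hiI' : i ∈ (insert i₀ I)ᶜ := (hmemI i).mpr ⟨hne, hi⟩
        have hib : i ≠ b := by
          intro h
          rw [← h] at hbI'
          rcases Finset.mem_insert.mp hbI' with h' | h'
          · exact hne h'
          · exact (Finset.mem_compl.mp hi) h'
        have : τ i = σ' i := by
          rw [hτdef, Equiv.Perm.mul_apply, Equiv.swap_apply_of_ne_of_ne hne hib]
        rw [this, hE' i hiI']
        rfl
    · intro f hf f' hf' h
      obtain ⟨m', -, hm'⟩ := h.exists_pow_eq'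
      have hkey := key m' f
      rw [hm'] at hkey
      rcases hkey with h1 | ⟨h1, -⟩ | ⟨-, h2⟩
      · exact hC' f (Finset.mem_insert_of_mem hf) f' (Finset.mem_insert_of_mem hf') h1
      · exact absurd ((hC' f (Finset.mem_insert_of_mem hf) i₀ (Finset.mem_insert_self _ _) h1) ▸ hf)
          hi₀I
      · exact absurd ((hC' i₀ (Finset.mem_insert_self _ _) f' (Finset.mem_insert_of_mem hf') h2).symm ▸ hf')
          hi₀I

/-- For a normalized matrix, every complement-bijection value is achievable as a
base value of `k` assignments with supervisions `I` on `J`. -/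
theorem base_value_achieves_complement_bijection {n : ℕ} (A : Matrix (Fin n) (Fin n) ℝ)
    (hdiag : ∀ i, A i i = 0)
    (hopt : ∀ π : Equiv.Perm (Fin n), ∑ i, A i (π i) ≤ 0)
    (I J : Finset (Fin n)) (k : ℕ) (hI : I.card = k) (hJ : J.card = k)
    (P : {x // x ∈ Iᶜ} ≃ {x // x ∈ Jᶜ}) :
    ∃ (τ : Fin k → Equiv.Perm (Fin n)) (π : {x // x ∈ I} ≃ {x // x ∈ J})
      (e : Fin k ≃ {x // x ∈ I}),
      (∀ t : Fin k, τ t (e t : Fin n) = (π (e t) : Fin n)) ∧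
      (∑ i : {x // x ∈ Iᶜ}, A i.1 (P i).1) ≤
        ∑ t : Fin k, ∑ i ∈ ({(e t : Fin n)}ᶜ : Finset (Fin n)), A i (τ t i) := by
  classical
  obtain ⟨σ, hE, hC⟩ := exists_good_extension (Iᶜ.card) I J (hI.trans hJ.symm) rfl P
  have hccard : Iᶜ.card = Jᶜ.card := by
    rw [Finset.card_compl, Finset.card_compl, hI, hJ]
  have himg : Finset.image (⇑σ) Iᶜ = Jᶜ := by
    apply Finset.eq_of_subset_of_card_le
    · intro x hx
      obtain ⟨i, hi, rfl⟩ := Finset.mem_image.mp hx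
      rw [hE i hi]
      exact (P ⟨i, hi⟩).2
    · rw [Finset.card_image_of_injective _ σ.injective, hccard]
  have hσI : ∀ i ∈ I, σ i ∈ J := by
    intro i hi
    by_contra hmem
    have h1 : σ i ∈ Jᶜ := Finset.mem_compl.mpr hmem
    rw [← himg] at h1
    obtain ⟨i', hi', heq⟩ := Finset.mem_image.mp h1
    exact (Finset.mem_compl.mp (σ.injective heq ▸ hi')) hi
  have hσJ : ∀ j ∈ J, σ.symm j ∈ I := by
    intro j hj
    by_contra hmem
    have h1 : σ.symm j ∈ Iᶜ := Finset.mem_compl.mpr hmem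
    have h2 : σ (σ.symm j) ∈ Jᶜ := by
      rw [hE _ h1]; exact (P _).2
    rw [σ.apply_symm_apply] at h2
    exact (Finset.mem_compl.mp h2) hj
  let π : {x // x ∈ I} ≃ {x // x ∈ J} :=
    { toFun := fun x => ⟨σ x.1, hσI x.1 x.2⟩
      invFun := fun y => ⟨σ.symm y.1, hσJ y.1 y.2⟩
      left_inv := fun x => Subtype.ext (σ.symm_apply_apply x.1)
      right_inv := fun y => Subtype.ext (σ.apply_symm_apply y.1) }
  let e : Fin k ≃ {x // x ∈ I} := (I.equivFinOfCardEq hI).symm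
  refine ⟨fun t => σ.cycleOf ((e t : Fin n)), π, e, ?_, ?_⟩
  · intro t
    show (σ.cycleOf ((e t : Fin n))) ((e t : Fin n)) = σ ((e t : Fin n))
    exact Equiv.Perm.cycleOf_apply_self σ _
  -- the sum inequality
  set g : Fin n → ℝ := fun f => ∑ i ∈ ({f}ᶜ : Finset (Fin n)), A i (σ.cycleOf f i) with hgdef
  have hg : ∀ f : Fin n,
      g f = ∑ i ∈ Finset.univ.filter (fun i => σ.SameCycle f i ∧ i ≠ f), A i (σ i) := by
    intro f
    have h1 : ∀ i ∈ ({f}ᶜ : Finset (Fin n)),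
        A i (σ.cycleOf f i) = if σ.SameCycle f i then A i (σ i) else 0 := by
      intro i _
      rw [Equiv.Perm.cycleOf_apply]
      split_ifs
      · rfl
      · exact hdiag i
    calc g f = ∑ i ∈ ({f}ᶜ : Finset (Fin n)), if σ.SameCycle f i then A i (σ i) else 0 :=
          Finset.sum_congr rfl h1
      _ = ∑ i ∈ ({f}ᶜ : Finset (Fin n)).filter (fun i => σ.SameCycle f i), A i (σ i) :=
          (Finset.sum_filter _ _).symm
      _ = _ := by
          apply Finset.sum_congr _ (fun _ _ => rfl)
          ext i
          simp only [Finset.mem_filter, Finset.mem_compl, Finset.mem_singleton, Finset.mem_univ,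
            true_and]
          tauto
  have hdisj : (↑I : Set (Fin n)).PairwiseDisjoint
      (fun f => Finset.univ.filter (fun i => σ.SameCycle f i ∧ i ≠ f)) := by
    intro f hf f' hf' hne
    simp only [Function.onFun]
    rw [Finset.disjoint_left]
    intro i hi hi'
    simp only [Finset.mem_filter] at hi hi'
    exact hne (hC f (Finset.mem_coe.mp hf) f' (Finset.mem_coe.mp hf')
      (hi.2.1.trans hi'.2.1.symm))
  set B : Finset (Fin n) := I.biUnion (fun f => Finset.univ.filter (fun i => σ.SameCycle f i ∧ i ≠ f)) with hBdef
  have hBsub : B ⊆ Iᶜ := by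
    intro i hi
    obtain ⟨f, hf, hfi⟩ := Finset.mem_biUnion.mp hi
    simp only [Finset.mem_filter] at hfi
    refine Finset.mem_compl.mpr fun hiI => ?_
    exact hfi.2.2 (hC f hf i hiI hfi.2.1).symm
  have hV : (∑ i : {x // x ∈ Iᶜ}, A i.1 (P i).1) = ∑ i ∈ Iᶜ, A i (σ i) := by
    rw [← Finset.sum_coe_sort Iᶜ (fun i => A i (σ i))]
    refine Finset.sum_congr rfl fun i _ => ?_
    rw [hE (i : Fin n) i.2, Subtype.coe_eta]
  set p : Fin n → Prop := fun i => ∀ f ∈ I, ¬σ.SameCycle f i with hpdef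
  have hUp : Iᶜ \ B = Finset.univ.filter p := by
    ext i
    simp only [Finset.mem_sdiff, Finset.mem_compl, Finset.mem_filter, Finset.mem_univ, true_and]
    constructor
    · rintro ⟨hiI, hiB⟩ f hf hsc
      refine hiB (Finset.mem_biUnion.mpr ⟨f, hf, ?_⟩)
      simp only [Finset.mem_filter, Finset.mem_univ, true_and]
      exact ⟨hsc, fun h => hiI (h ▸ hf)⟩
    · intro hp
      have hiI : i ∉ I := fun hiI => hp i hiI (Equiv.Perm.SameCycle.refl σ i)
      refine ⟨hiI, fun hiB => ?_⟩
      obtain ⟨f, hf, hfi⟩ := Finset.mem_biUnion.mp hiB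
      simp only [Finset.mem_filter] at hfi
      exact hp f hf hfi.2.1
  have hinv : ∀ i, p i ↔ p (σ i) := by
    intro i
    constructor
    · intro h f hf hsc
      exact h f hf (Equiv.Perm.sameCycle_apply_right.mp hsc)
    · intro h f hf hsc
      exact h f hf (Equiv.Perm.sameCycle_apply_right.mpr hsc)
  have hle : ∑ i ∈ Iᶜ \ B, A i (σ i) ≤ 0 := by
    have hρ := hopt (Equiv.Perm.ofSubtype (σ.subtypePerm (fun i => (hinv i).symm)))
    have heq : ∑ i, A i (Equiv.Perm.ofSubtype (σ.subtypePerm (fun i => (hinv i).symm)) i)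
        = ∑ i ∈ Iᶜ \ B, A i (σ i) := by
      rw [hUp, ← Finset.sum_filter_add_sum_filter_not Finset.univ p
        (fun i => A i (Equiv.Perm.ofSubtype (σ.subtypePerm (fun i => (hinv i).symm)) i))]
      have h1 : ∀ i ∈ Finset.univ.filter p,
          A i (Equiv.Perm.ofSubtype (σ.subtypePerm (fun i => (hinv i).symm)) i) = A i (σ i) := by
        intro i hi
        rw [Equiv.Perm.ofSubtype_subtypePerm_of_mem (fun i => (hinv i).symm) (Finset.mem_filter.mp hi).2]
      have h2 : ∀ i ∈ Finset.univ.filter (fun i => ¬ p i),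
          A i (Equiv.Perm.ofSubtype (σ.subtypePerm (fun i => (hinv i).symm)) i) = 0 := by
        intro i hi
        rw [Equiv.Perm.ofSubtype_subtypePerm_of_not_mem (fun i => (hinv i).symm) (Finset.mem_filter.mp hi).2]
        exact hdiag i
      rw [Finset.sum_congr rfl h1, Finset.sum_congr rfl h2, Finset.sum_const_zero, add_zero]
    rw [← heq]
    exact hρ
  have hsplit : ∑ i ∈ Iᶜ \ B, A i (σ i) + ∑ i ∈ B, A i (σ i) = ∑ i ∈ Iᶜ, A i (σ i) :=
    Finset.sum_sdiff hBsub
  have hRHS : ∑ t : Fin k, ∑ i ∈ ({((e t : {x // x ∈ I}) : Fin n)}ᶜ : Finset (Fin n)),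
      A i (σ.cycleOf ((e t : {x // x ∈ I}) : Fin n) i) = ∑ i ∈ B, A i (σ i) := by
    have h1 : ∑ t : Fin k, g ((e t : {x // x ∈ I}) : Fin n)
        = ∑ x : {x // x ∈ I}, g (x : Fin n) :=
      Equiv.sum_comp e (fun x => g (x : Fin n))
    have h2 : ∑ x : {x // x ∈ I}, g (x : Fin n) = ∑ f ∈ I, g f :=
      Finset.sum_coe_sort I g
    calc ∑ t : Fin k, ∑ i ∈ ({((e t : {x // x ∈ I}) : Fin n)}ᶜ : Finset (Fin n)),
        A i (σ.cycleOf ((e t : {x // x ∈ I}) : Fin n) i)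
        = ∑ f ∈ I, g f := h1.trans h2
      _ = ∑ f ∈ I, ∑ i ∈ Finset.univ.filter (fun i => σ.SameCycle f i ∧ i ≠ f), A i (σ i) :=
          Finset.sum_congr rfl (fun f _ => hg f)
      _ = ∑ i ∈ B, A i (σ i) := (Finset.sum_biUnion hdisj).symm
  rw [hV, hRHS, ← hsplit]
  nlinarith [hle]
end
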